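/- arXiv:1206.2054 — 12 statements merged into one kernel-verified Lean document; each statement's English description precedes it below -/
import Mathlib

section
/- Let q ≥ 1 be an integer and let λ > μ > 0 be real numbers. Then (λ^q − μ^q)/(λ − μ) ≥ (2^{(q−1)/2} / max_{0 ≤ l ≤ q−1} binom(q−1, l)) · (λμ)^{(q−1)/2}. -/
/-- Let `q ≥ 1` be an integer and `λ > μ > 0` real numbers. Then
`(λ^q − μ^q)/(λ − μ) ≥ (2^{(q−1)/2} / max_{0 ≤ l ≤ q−1} binom(q−1,l)) · (λμ)^{(q−1)/2}`. -/
theorem stmt_0 (q : ℕ) (hq : 1 ≤ q) (lam mu : ℝ) (hmu : 0 < mu) (hlm : mu < lam) :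
    (lam ^ q - mu ^ q) / (lam - mu) ≥
      (2 : ℝ) ^ (((q : ℝ) - 1) / 2) /
          (((Finset.range q).sup fun l => (q - 1).choose l : ℕ) : ℝ) *
        (lam * mu) ^ (((q : ℝ) - 1) / 2) := by
  have hlam : 0 < lam := hmu.trans hlm
  set M : ℕ := (Finset.range q).sup fun l => (q - 1).choose l with hMdef
  set e : ℝ := ((q : ℝ) - 1) / 2 with he
  have hr : 0 < lam * mu := mul_pos hlam hmu
  -- e as cast
  have hcast : ((q - 1 : ℕ) : ℝ) = (q : ℝ) - 1 := by
    push_cast [Nat.cast_sub hq]; ring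
  have hre : (lam * mu) ^ e = Real.sqrt ((lam * mu) ^ (q - 1)) := by
    rw [Real.sqrt_eq_rpow, ← Real.rpow_natCast (lam*mu) (q-1),
      ← Real.rpow_mul hr.le, hcast]
    congr 1; ring
  have h2e : (2 : ℝ) ^ e = Real.sqrt (2 ^ (q - 1)) := by
    rw [Real.sqrt_eq_rpow, ← Real.rpow_natCast (2:ℝ) (q-1),
      ← Real.rpow_mul (by norm_num), hcast]
    congr 1; ring
  -- M ≥ 1
  have hM1 : 1 ≤ M := by
    have : (q - 1).choose 0 ≤ M :=
      Finset.le_sup (f := fun l => (q - 1).choose l) (Finset.mem_range.2 hq)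
    simpa using this
  have hM1' : (1:ℝ) ≤ (M:ℝ) := by exact_mod_cast hM1
  -- 2^(q-1) ≤ q * M
  have hqM : (2:ℕ) ^ (q - 1) ≤ q * M := by
    have hsum : ∑ m ∈ Finset.range q, (q - 1).choose m = 2 ^ (q - 1) := by
      have := Nat.sum_range_choose (q - 1)
      rwa [Nat.sub_add_cancel hq] at this
    calc (2:ℕ) ^ (q-1) = ∑ m ∈ Finset.range q, (q - 1).choose m := hsum.symm
      _ ≤ (Finset.range q).card • M :=
          Finset.sum_le_card_nsmul _ _ _ (fun x hx => Finset.le_sup hx)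
      _ = q * M := by simp [smul_eq_mul]
  -- 2^e / M ≤ q
  have hfrac : (2:ℝ) ^ e / (M:ℝ) ≤ (q:ℝ) := by
    have hqM' : (2:ℝ) ^ (q-1) ≤ (q:ℝ) * M := by exact_mod_cast hqM
    have hs : Real.sqrt (2 ^ (q-1)) ≤ (q:ℝ) * M := by
      have h1 : (1:ℝ) ≤ (q:ℝ) * M := by
        have : (1:ℝ) ≤ (q:ℝ) := by exact_mod_cast hq
        nlinarith
      have := Real.sqrt_le_sqrt hqM'
      calc Real.sqrt (2 ^ (q-1)) ≤ Real.sqrt ((q:ℝ)*M) := this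
        _ ≤ (q:ℝ)*M := by
            nlinarith [Real.sq_sqrt (by positivity : (0:ℝ) ≤ (q:ℝ)*M),
              Real.sqrt_nonneg ((q:ℝ)*M)]
    rw [h2e, div_le_iff₀ (by linarith : (0:ℝ) < (M:ℝ))]
    calc Real.sqrt (2 ^ (q-1)) ≤ (q:ℝ)*M := hs
      _ = (q:ℝ)*M := rfl
  -- LHS = geometric sum
  have hS : (lam ^ q - mu ^ q) / (lam - mu)
      = ∑ i ∈ Finset.range q, lam ^ i * mu ^ (q - 1 - i) := by
    rw [eq_comm, eq_div_iff (by linarith : lam - mu ≠ 0), geom_sum₂_mul]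
  -- pairing bound
  have hpair : ∀ i ∈ Finset.range q,
      2 * (lam*mu) ^ e ≤ lam ^ i * mu ^ (q-1-i) + lam ^ (q-1-i) * mu ^ i := by
    intro i hi
    have hi' : i ≤ q - 1 := Nat.le_sub_one_of_lt (Finset.mem_range.1 hi)
    have hprod : (lam ^ i * mu ^ (q-1-i)) * (lam ^ (q-1-i) * mu ^ i)
        = (lam*mu) ^ (q-1) := by
      rw [mul_pow]
      rw [show lam ^ i * mu ^ (q-1-i) * (lam ^ (q-1-i) * mu ^ i)
        = (lam ^ i * lam ^ (q-1-i)) * (mu ^ i * mu ^ (q-1-i)) by ring,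
        ← pow_add, ← pow_add, Nat.add_sub_cancel' hi']
    have ha : 0 ≤ lam ^ i * mu ^ (q-1-i) := by positivity
    have hb : 0 ≤ lam ^ (q-1-i) * mu ^ i := by positivity
    have := two_mul_le_add_sq (Real.sqrt (lam ^ i * mu ^ (q-1-i)))
      (Real.sqrt (lam ^ (q-1-i) * mu ^ i))
    rw [Real.sq_sqrt ha, Real.sq_sqrt hb] at this
    calc 2 * (lam*mu) ^ e = 2 * Real.sqrt ((lam ^ i * mu ^ (q-1-i)) * (lam ^ (q-1-i) * mu ^ i)) := by
          rw [hre, hprod]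
      _ = 2 * (Real.sqrt (lam ^ i * mu ^ (q-1-i)) * Real.sqrt (lam ^ (q-1-i) * mu ^ i)) := by
          rw [Real.sqrt_mul ha]
      _ ≤ _ := by linarith
  -- sum reflect
  have hrefl : ∑ i ∈ Finset.range q, lam ^ (q-1-i) * mu ^ i
      = ∑ i ∈ Finset.range q, lam ^ i * mu ^ (q-1-i) := by
    rw [← Finset.sum_range_reflect (fun i => lam ^ (q-1-i) * mu ^ i) q]
    apply Finset.sum_congr rfl
    intro i hi
    have hi' : i ≤ q - 1 := Nat.le_sub_one_of_lt (Finset.mem_range.1 hi)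
    rw [Nat.sub_sub_self hi']
  have hqS : (q:ℝ) * (lam*mu) ^ e ≤ ∑ i ∈ Finset.range q, lam ^ i * mu ^ (q - 1 - i) := by
    have h2 : (q:ℝ) * (2 * (lam*mu) ^ e)
        ≤ ∑ i ∈ Finset.range q, (lam ^ i * mu ^ (q-1-i) + lam ^ (q-1-i) * mu ^ i) := by
      have := Finset.card_nsmul_le_sum (Finset.range q)
        (fun i => lam ^ i * mu ^ (q-1-i) + lam ^ (q-1-i) * mu ^ i)
        (2 * (lam*mu) ^ e) hpair
      simpa [nsmul_eq_mul] using this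
    rw [Finset.sum_add_distrib, hrefl] at h2
    nlinarith
  -- combine
  rw [ge_iff_le, hS]
  have hre0 : 0 ≤ (lam*mu) ^ e := Real.rpow_nonneg hr.le e
  calc (2:ℝ) ^ e / M * (lam*mu) ^ e ≤ (q:ℝ) * (lam*mu) ^ e :=
        mul_le_mul_of_nonneg_right hfrac hre0
    _ ≤ _ := hqS
end

section
/- Let q ≥ 1 and p ≥ 1 be integers and let λ_1 > λ_2 > … > λ_p > 0 be real numbers. Then ∏_{1 ≤ i < j ≤ p} (λ_i^q − λ_j^q)/(λ_i − λ_j) ≥ (2^{(q−1)/2} / max_{0 ≤ l ≤ q−1} binom(q−1, l))^{p(p−1)/2} · (∏_{i=1}^p λ_i)^{(q−1)(p−1)/2}. -/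
open Finset Real

private lemma pair_bound {x y : ℝ} (hy : 0 < y) (hxy : y < x) (q : ℕ) (hq : 1 ≤ q) :
    (q : ℝ) * (x * y) ^ (((q:ℝ)-1)/2) ≤ (x ^ q - y ^ q) / (x - y) := by
  have hx : 0 < x := hy.trans hxy
  have hne : x - y ≠ 0 := sub_ne_zero.2 (ne_of_gt hxy)
  have hxy0 : (0:ℝ) < x * y := mul_pos hx hy
  have hgeom : (x ^ q - y ^ q) / (x - y) = ∑ l ∈ range q, x ^ l * y ^ (q - 1 - l) := by
    rw [div_eq_iff hne]; exact (geom_sum₂_mul x y q).symm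
  rw [hgeom]
  -- key pair inequality
  have key : ∀ l ∈ range q,
      2 * (x * y) ^ (((q:ℝ)-1)/2) ≤ x ^ l * y ^ (q - 1 - l) + x ^ (q - 1 - l) * y ^ l := by
    intro l hl
    rw [mem_range] at hl
    set a := x ^ l * y ^ (q - 1 - l) with ha
    set b := x ^ (q - 1 - l) * y ^ l with hb
    have hab : a * b = (x * y) ^ (q - 1) := by
      have h1 : l + (q-1-l) = q-1 := by omega
      have h2 : (q-1-l) + l = q-1 := by omega
      calc a * b = x ^ (l + (q-1-l)) * y ^ ((q-1-l) + l) := by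
            rw [pow_add, pow_add, ha, hb]; ring
        _ = (x*y)^(q-1) := by rw [h1, h2, mul_pow]
    have ha0 : 0 < a := by positivity
    have hb0 : 0 < b := by positivity
    have hsq : Real.sqrt (a * b) ≤ (a + b) / 2 := by
      nlinarith [sq_nonneg (Real.sqrt a - Real.sqrt b), Real.sq_sqrt ha0.le,
        Real.sq_sqrt hb0.le, Real.sqrt_mul ha0.le b, Real.sqrt_nonneg a, Real.sqrt_nonneg b]
    have hseq : Real.sqrt (a * b) = (x * y) ^ (((q:ℝ)-1)/2) := by
      rw [hab, Real.sqrt_eq_rpow, ← Real.rpow_natCast (x*y) (q-1),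
        ← Real.rpow_mul hxy0.le]
      congr 1
      rw [Nat.cast_sub hq, Nat.cast_one]
      ring
    linarith [hsq, hseq.symm ▸ hsq]
  -- reflect sum
  have hrefl : ∑ l ∈ range q, x ^ (q - 1 - l) * y ^ l
      = ∑ l ∈ range q, x ^ l * y ^ (q - 1 - l) := by
    rw [← Finset.sum_range_reflect (fun l => x ^ l * y ^ (q - 1 - l)) q]
    apply Finset.sum_congr rfl
    intro l hl
    rw [mem_range] at hl
    congr 2
    omega
  have hsum : (q:ℝ) * (2 * (x * y) ^ (((q:ℝ)-1)/2))
      ≤ 2 * ∑ l ∈ range q, x ^ l * y ^ (q - 1 - l) := by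
    calc (q:ℝ) * (2 * (x * y) ^ (((q:ℝ)-1)/2))
        = ∑ _l ∈ range q, 2 * (x * y) ^ (((q:ℝ)-1)/2) := by
          rw [Finset.sum_const, card_range, nsmul_eq_mul]
      _ ≤ ∑ l ∈ range q, (x ^ l * y ^ (q - 1 - l) + x ^ (q - 1 - l) * y ^ l) :=
          Finset.sum_le_sum key
      _ = 2 * ∑ l ∈ range q, x ^ l * y ^ (q - 1 - l) := by
          rw [Finset.sum_add_distrib, hrefl]; ring
  linarith

/-- Let `q ≥ 1`, `p ≥ 1` be integers and `λ_1 > … > λ_p > 0` reals. Then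
`∏_{i<j} (λ_i^q − λ_j^q)/(λ_i − λ_j)
  ≥ (2^{(q−1)/2}/max_l binom(q−1,l))^{p(p−1)/2} · (∏ λ_i)^{(q−1)(p−1)/2}`. -/
theorem stmt_1 (q p : ℕ) (hq : 1 ≤ q) (hp : 1 ≤ p) (lam : Fin p → ℝ)
    (hanti : StrictAnti lam) (hpos : ∀ i, 0 < lam i) :
    (∏ i : Fin p, ∏ j ∈ Finset.Ioi i, (lam i ^ q - lam j ^ q) / (lam i - lam j)) ≥
      ((2 : ℝ) ^ (((q : ℝ) - 1) / 2) /
            (((Finset.range q).sup fun l => (q - 1).choose l : ℕ) : ℝ)) ^ (p * (p - 1) / 2) *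
        (∏ i : Fin p, lam i) ^ (((q : ℝ) - 1) * ((p : ℝ) - 1) / 2) := by
  set e : ℝ := ((q:ℝ)-1)/2 with he
  set M : ℕ := (Finset.range q).sup fun l => (q - 1).choose l with hM
  set C : ℝ := (2:ℝ) ^ e / M with hC
  have hM1 : 1 ≤ M := by
    have h0 : (q-1).choose 0 ≤ M := Finset.le_sup (Finset.mem_range.2 hq)
    simpa using h0
  have hM0 : (0:ℝ) < M := by exact_mod_cast hM1
  have hC0 : 0 < C := by positivity
  -- C ≤ q
  have hCq : C ≤ (q:ℝ) := by
    have h1 : 2 ^ (q-1) ≤ q * M := by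
      have hs : ∑ l ∈ Finset.range q, (q-1).choose l = 2 ^ (q-1) := by
        have hr : Finset.range q = Finset.range ((q-1)+1) := by congr 1; omega
        rw [hr, Nat.sum_range_choose]
      calc 2 ^ (q-1) = ∑ l ∈ Finset.range q, (q-1).choose l := hs.symm
        _ ≤ (Finset.range q).card • M :=
            Finset.sum_le_card_nsmul _ _ M (fun l hl => Finset.le_sup hl)
        _ = q * M := by rw [Finset.card_range, smul_eq_mul]
    have h2 : (2:ℝ) ^ e ≤ (2:ℝ) ^ ((q:ℝ)-1) := by
      apply Real.rpow_le_rpow_of_exponent_le one_le_two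
      have : (1:ℝ) ≤ (q:ℝ) := by exact_mod_cast hq
      rw [he]; linarith
    have h3 : (2:ℝ) ^ ((q:ℝ)-1) = ((2 ^ (q-1) : ℕ) : ℝ) := by
      rw [show ((q:ℝ)-1) = (((q-1:ℕ)):ℝ) by rw [Nat.cast_sub hq, Nat.cast_one],
        Real.rpow_natCast]
      push_cast
      ring
    have h4 : ((2 ^ (q-1) : ℕ) : ℝ) ≤ (q:ℝ) * M := by exact_mod_cast h1
    rw [hC, div_le_iff₀ hM0]
    calc (2:ℝ)^e ≤ (2:ℝ)^((q:ℝ)-1) := h2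
      _ = ((2 ^ (q-1) : ℕ) : ℝ) := h3
      _ ≤ (q:ℝ) * M := h4
  -- step 1: termwise bound
  have step1 : ∏ i : Fin p, ∏ j ∈ Finset.Ioi i, (C * (lam i * lam j) ^ e)
      ≤ ∏ i : Fin p, ∏ j ∈ Finset.Ioi i, (lam i ^ q - lam j ^ q) / (lam i - lam j) := by
    apply Finset.prod_le_prod
    · intro i _
      apply Finset.prod_nonneg
      intro j _
      exact mul_nonneg hC0.le (Real.rpow_nonneg (mul_pos (hpos i) (hpos j)).le e)
    · intro i _
      apply Finset.prod_le_prod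
      · intro j _
        exact mul_nonneg hC0.le (Real.rpow_nonneg (mul_pos (hpos i) (hpos j)).le e)
      · intro j hj
        rw [Finset.mem_Ioi] at hj
        have hij := hanti hj
        calc C * (lam i * lam j) ^ e ≤ (q:ℝ) * (lam i * lam j) ^ e := by
              exact mul_le_mul_of_nonneg_right hCq
                (Real.rpow_nonneg (mul_pos (hpos i) (hpos j)).le e)
          _ ≤ (lam i ^ q - lam j ^ q) / (lam i - lam j) :=
              pair_bound (hpos j) hij q hq
  -- compute LHS of step1
  have hcardIoi : ∀ i : Fin p, (Finset.Ioi i).card = p - 1 - (i:ℕ) := fun i => Fin.card_Ioi i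
  have hN : ∑ i : Fin p, (Finset.Ioi i).card = p * (p-1) / 2 := by
    have h1 : ∑ i : Fin p, (Finset.Ioi i).card = ∑ i : Fin p, (p - 1 - (i:ℕ)) :=
      Finset.sum_congr rfl (fun i _ => hcardIoi i)
    rw [h1, Fin.sum_univ_eq_sum_range (fun k => p - 1 - k),
      Finset.sum_range_reflect (fun k => k) p, Finset.sum_range_id]
  have hprod0 : (0:ℝ) < ∏ i : Fin p, lam i := Finset.prod_pos (fun i _ => hpos i)
  have hP : ∏ i : Fin p, ∏ j ∈ Finset.Ioi i, (lam i * lam j)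
      = (∏ i : Fin p, lam i) ^ (p - 1) := by
    have hswap : ∏ i : Fin p, ∏ j ∈ Finset.Ioi i, lam j
        = ∏ j : Fin p, ∏ i ∈ Finset.Iio j, lam j := by
      apply Finset.prod_comm'
      intro i j
      simp [Finset.mem_Ioi, Finset.mem_Iio]
    calc ∏ i : Fin p, ∏ j ∈ Finset.Ioi i, (lam i * lam j)
        = ∏ i : Fin p, ((∏ _j ∈ Finset.Ioi i, lam i) * ∏ j ∈ Finset.Ioi i, lam j) := by
          simp [Finset.prod_mul_distrib]
      _ = (∏ i : Fin p, lam i ^ (Finset.Ioi i).card)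
            * ∏ i : Fin p, ∏ j ∈ Finset.Ioi i, lam j := by
          rw [← Finset.prod_mul_distrib]
          simp [Finset.prod_const]
      _ = (∏ i : Fin p, lam i ^ (Finset.Ioi i).card)
            * ∏ j : Fin p, lam j ^ (Finset.Iio j).card := by
          rw [hswap]; simp [Finset.prod_const]
      _ = ∏ i : Fin p, lam i ^ ((Finset.Ioi i).card + (Finset.Iio i).card) := by
          rw [← Finset.prod_mul_distrib]; simp [pow_add]
      _ = ∏ i : Fin p, lam i ^ (p - 1) := by
          apply Finset.prod_congr rfl
          intro i _
          congr 1
          have hi := i.isLt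
          rw [hcardIoi i, Fin.card_Iio]
          omega
      _ = (∏ i : Fin p, lam i) ^ (p-1) := by rw [Finset.prod_pow]
  have hmain : ∏ i : Fin p, ∏ j ∈ Finset.Ioi i, (C * (lam i * lam j) ^ e)
      = C ^ (p*(p-1)/2) * (∏ i : Fin p, lam i) ^ (((q:ℝ)-1) * ((p:ℝ)-1)/2) := by
    calc ∏ i : Fin p, ∏ j ∈ Finset.Ioi i, (C * (lam i * lam j) ^ e)
        = ∏ i : Fin p, (C ^ (Finset.Ioi i).card * ∏ j ∈ Finset.Ioi i, (lam i * lam j) ^ e) :=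
          Finset.prod_congr rfl (fun i _ => by rw [Finset.prod_mul_distrib, Finset.prod_const])
      _ = (∏ i : Fin p, C ^ (Finset.Ioi i).card)
            * ∏ i : Fin p, ∏ j ∈ Finset.Ioi i, (lam i * lam j) ^ e := by
          rw [Finset.prod_mul_distrib]
      _ = C ^ (p*(p-1)/2) * (∏ i : Fin p, ∏ j ∈ Finset.Ioi i, (lam i * lam j)) ^ e := by
          rw [Finset.prod_pow_eq_pow_sum, hN]
          congr 1
          rw [← Real.finset_prod_rpow _ _
            (fun i _ => Finset.prod_nonneg (fun j _ => (mul_pos (hpos i) (hpos j)).le)) e]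
          exact Finset.prod_congr rfl (fun i _ =>
            Real.finset_prod_rpow _ _ (fun j _ => (mul_pos (hpos i) (hpos j)).le) e)
      _ = C ^ (p*(p-1)/2) * (∏ i : Fin p, lam i) ^ (((q:ℝ)-1) * ((p:ℝ)-1)/2) := by
          rw [hP, ← Real.rpow_natCast (∏ i : Fin p, lam i) (p-1),
            ← Real.rpow_mul hprod0.le]
          congr 1
          rw [Nat.cast_sub hp, Nat.cast_one, he]
          ring
  rw [ge_iff_le, ← hmain]
  exact step1
end

section
/- Let C be a real symmetric positive definite p×p matrix and let c > 0. Then the function f(B) = tr(B^{−1} C) + c · log det B, defined on the set of real symmetric positive definite p×p matrices, attains a strict global minimum at B = (1/c) · C; that is, f((1/c)·C) < f(B) for every symmetric positive definite B ≠ (1/c)·C. -/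
open Matrix Finset
open scoped MatrixOrder

private lemma my_trace_eq_sum_eigenvalues {n : Type*} [Fintype n] [DecidableEq n]
    {A : Matrix n n ℝ} (hA : A.IsHermitian) :
    A.trace = ∑ i, hA.eigenvalues i := by
  nth_rewrite 1 [hA.spectral_theorem]
  rw [Unitary.conjStarAlgAut_apply]
  rw [Matrix.trace_mul_cycle,
    (Matrix.mem_unitaryGroup_iff').mp (hA.eigenvectorUnitary).2, one_mul, Matrix.trace_diagonal]
  simp

/-- Let `C` be a real symmetric positive definite `p × p` matrix and `c > 0`. Then
`f(B) = tr(B⁻¹ C) + c · log det B` on positive definite matrices attains a strict global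
minimum at `B = (1/c) • C`. -/
theorem stmt_3 (p : ℕ) (C : Matrix (Fin p) (Fin p) ℝ) (hC : C.PosDef) (c : ℝ) (hc : 0 < c)
    (B : Matrix (Fin p) (Fin p) ℝ) (hB : B.PosDef) (hne : B ≠ (1 / c) • C) :
    (((1 / c) • C)⁻¹ * C).trace + c * Real.log ((1 / c) • C).det <
      (B⁻¹ * C).trace + c * Real.log B.det := by
  have hcne : c ≠ 0 := hc.ne'
  have hCdet : 0 < C.det := hC.det_pos
  have hBdet : 0 < B.det := hB.det_pos
  set S := CFC.sqrt C with hSdef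
  have hSps : S.PosSemidef := (CFC.sqrt_nonneg C).posSemidef
  have hSH : Sᴴ = S := hSps.1
  have hSS : S * S = C := CFC.sqrt_mul_sqrt_self C hC.posSemidef.nonneg
  have hSdet : S.det ≠ 0 := by
    intro h
    have : C.det = 0 := by rw [← hSS, Matrix.det_mul, h, mul_zero]
    exact hCdet.ne' this
  have hSunit : IsUnit S.det := isUnit_iff_ne_zero.mpr hSdet
  have hSinj : Function.Injective S.mulVec :=
    Matrix.mulVec_injective_iff_isUnit.mpr (Matrix.isUnit_iff_isUnit_det S |>.mpr hSunit)
  set A := S * B⁻¹ * S with hAdef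
  have hBinv : B⁻¹.PosDef := hB.inv
  have hAH : A.IsHermitian := by
    have := Matrix.isHermitian_mul_mul_conjTranspose S hBinv.isHermitian
    rwa [hSH] at this
  have hA : A.PosDef := by
    refine Matrix.PosDef.of_dotProduct_mulVec_pos hAH (fun x hx => ?_)
    have hx' : S *ᵥ x ≠ 0 := by
      exact (hSinj.ne_iff' (Matrix.mulVec_zero S)).mpr hx
    have h2 := hBinv.dotProduct_mulVec_pos hx'
    have h3 : A *ᵥ x = S *ᵥ (B⁻¹ *ᵥ (S *ᵥ x)) := by
      simp [hAdef, Matrix.mulVec_mulVec, Matrix.mul_assoc]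
    rw [h3]
    have h4 : star x ⬝ᵥ (S *ᵥ (B⁻¹ *ᵥ (S *ᵥ x))) = star (S *ᵥ x) ⬝ᵥ (B⁻¹ *ᵥ (S *ᵥ x)) := by
      rw [Matrix.dotProduct_mulVec, Matrix.star_mulVec, hSH]
    rw [h4]; exact h2
  set lam := hAH.eigenvalues with hlam
  have hlampos : ∀ i, 0 < lam i := fun i => hA.eigenvalues_pos i
  have htrA : A.trace = ∑ i, lam i := my_trace_eq_sum_eigenvalues hAH
  have hdetA : A.det = ∏ i, lam i := by
    have := hAH.det_eq_prod_eigenvalues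
    simpa using this
  have hdetApos : 0 < A.det := hA.det_pos
  -- trace identity
  have htr : (B⁻¹ * C).trace = A.trace := by
    rw [← hSS, ← Matrix.mul_assoc, Matrix.trace_mul_comm, ← Matrix.mul_assoc]
  -- determinant identity
  have hdet : A.det = C.det * B.det⁻¹ := by
    rw [hAdef, Matrix.det_mul, Matrix.det_mul, Matrix.det_nonsing_inv, ← hSS, Matrix.det_mul, Ring.inverse_eq_inv']
    ring
  have hlogB : Real.log B.det = Real.log C.det - Real.log A.det := by
    rw [hdet, Real.log_mul hCdet.ne' (inv_ne_zero hBdet.ne'), Real.log_inv]; ring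
  -- LHS computation
  have hinvsmul : ((1 / c) • C)⁻¹ = c • C⁻¹ := by
    letI : Invertible (1 / c) := invertibleOfNonzero (by positivity)
    rw [Matrix.inv_smul C (1 / c) (isUnit_iff_ne_zero.mpr hCdet.ne'), invOf_eq_inv]
    norm_num
  have hLmul : ((1 / c) • C)⁻¹ * C = c • (1 : Matrix (Fin p) (Fin p) ℝ) := by
    rw [hinvsmul, Matrix.smul_mul, Matrix.nonsing_inv_mul C (isUnit_iff_ne_zero.mpr hCdet.ne')]
  have hLtr : (((1 / c) • C)⁻¹ * C).trace = c * p := by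
    rw [hLmul, Matrix.trace_smul, Matrix.trace_one]; simp
  have hLdet : Real.log ((1 / c) • C).det = Real.log C.det - p * Real.log c := by
    rw [Matrix.det_smul, Real.log_mul (by positivity) hCdet.ne', Real.log_pow]
    rw [Real.log_div one_ne_zero hcne, Real.log_one]
    simp only [Fintype.card_fin]
    ring
  -- scalar inequality
  have key : ∑ _i : Fin p, (c - c * Real.log c) < ∑ i, (lam i - c * Real.log (lam i)) := by
    have hex : ∃ i, lam i ≠ c := by
      by_contra hall
      push_neg at hall
      apply hne
      have hAc : A = c • (1 : Matrix (Fin p) (Fin p) ℝ) := by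
        have hsp := hAH.spectral_theorem
        have hdiag : Matrix.diagonal (RCLike.ofReal ∘ lam) = c • (1 : Matrix (Fin p) (Fin p) ℝ) := by
          ext i j
          rcases eq_or_ne i j with rfl | h
          · simp [hall i]
          · simp [Matrix.diagonal_apply_ne _ h, Matrix.one_apply_ne h]
        rw [hdiag] at hsp
        rw [Unitary.conjStarAlgAut_apply] at hsp
        rw [hsp, Matrix.mul_smul, Matrix.mul_one, Matrix.smul_mul,
          (Matrix.mem_unitaryGroup_iff).mp (hAH.eigenvectorUnitary).2]
      -- from A = c • 1 deduce B = (1/c) • C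
      have hBinv_eq : B⁻¹ = c • C⁻¹ := by
        have h1 : S⁻¹ * A * S⁻¹ = B⁻¹ := by
          rw [hAdef, ← Matrix.mul_assoc, ← Matrix.mul_assoc,
            Matrix.nonsing_inv_mul S hSunit, Matrix.one_mul, Matrix.mul_assoc,
            Matrix.mul_nonsing_inv S hSunit, Matrix.mul_one]
        rw [← h1, hAc, Matrix.mul_smul, Matrix.mul_one, Matrix.smul_mul, ← Matrix.mul_inv_rev, hSS]
      have : B = (B⁻¹)⁻¹ := (Matrix.nonsing_inv_nonsing_inv B (isUnit_iff_ne_zero.mpr hBdet.ne')).symm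
      rw [this, hBinv_eq]
      letI : Invertible c := invertibleOfNonzero hcne
      rw [Matrix.inv_smul C⁻¹ c (isUnit_iff_ne_zero.mpr (by rw [Matrix.det_nonsing_inv, Ring.inverse_eq_inv']; exact inv_ne_zero hCdet.ne')),
        invOf_eq_inv, Matrix.nonsing_inv_nonsing_inv C (isUnit_iff_ne_zero.mpr hCdet.ne')]
      rw [one_div]
    obtain ⟨j, hj⟩ := hex
    refine Finset.sum_lt_sum (fun i _ => ?_) ⟨j, Finset.mem_univ j, ?_⟩
    · have h := Real.log_le_sub_one_of_pos (div_pos (hlampos i) hc)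
      rw [Real.log_div (hlampos i).ne' hcne] at h
      have h' := mul_le_mul_of_nonneg_left h hc.le
      have hx : c * (lam i / c - 1) = lam i - c := by field_simp
      rw [hx] at h'
      linarith
    · have h := Real.log_lt_sub_one_of_pos (div_pos (hlampos j) hc)
        (by intro h; apply hj; field_simp at h; linarith)
      rw [Real.log_div (hlampos j).ne' hcne] at h
      have h' := mul_lt_mul_of_pos_left h hc
      have hx : c * (lam j / c - 1) = lam j - c := by field_simp
      rw [hx] at h'
      linarith
  -- assemble
  have hsumlog : Real.log A.det = ∑ i, Real.log (lam i) := by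
    rw [hdetA, Real.log_prod (fun i _ => (hlampos i).ne')]
  have e2 : (B⁻¹ * C).trace + c * Real.log B.det
      = (∑ i, (lam i - c * Real.log (lam i))) + c * Real.log C.det := by
    rw [htr, htrA, hlogB, hsumlog, Finset.sum_sub_distrib, ← Finset.mul_sum]
    ring
  have e1 : (((1 / c) • C)⁻¹ * C).trace + c * Real.log ((1 / c) • C).det
      = (∑ _i : Fin p, (c - c * Real.log c)) + c * Real.log C.det := by
    rw [hLtr, hLdet, Finset.sum_const, Finset.card_univ, Fintype.card_fin]
    ring
  rw [e1, e2]
  linarith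
end

section
/- Let p ≥ 1 and q ≥ 1 be integers, m ≥ p a real number, and Ψ a real symmetric positive definite p×p matrix. Define f(B) = tr((Ψ^{−1/2} B Ψ^{−1/2})^{−q}) + (qm + p + 1) · log det B on the set of real symmetric positive definite p×p matrices. Then f attains a strict global minimum at B = (q/(qm+p+1))^{1/q} · Ψ. (Equivalently, the power inverse Wishart density with parameters (Ψ, m, q) has its unique mode at this matrix.) -/
open Finset Matrix

lemma tangent_le (q : ℕ) (hq : 1 ≤ q) {t t0 : ℝ} (ht : 0 ≤ t) (ht0 : 0 ≤ t0) :
    (q : ℝ) * t0 ^ (q - 1) * (t - t0) ≤ t ^ q - t0 ^ q := by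
  rw [← geom_sum₂_mul t t0 q]
  have hsum : ∀ i ∈ range q, t0 ^ i * t0 ^ (q - 1 - i) = t0 ^ (q - 1) := by
    intro i hi
    have := Finset.mem_range.mp hi
    rw [← pow_add]
    congr 1
    omega
  rcases le_total t0 t with h | h
  · refine mul_le_mul_of_nonneg_right ?_ (by linarith)
    calc (q : ℝ) * t0 ^ (q - 1) = ∑ i ∈ range q, t0 ^ i * t0 ^ (q - 1 - i) := by
          rw [Finset.sum_congr rfl hsum, Finset.sum_const, card_range, nsmul_eq_mul]
      _ ≤ ∑ i ∈ range q, t ^ i * t0 ^ (q - 1 - i) := by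
          refine Finset.sum_le_sum fun i _ => ?_
          exact mul_le_mul_of_nonneg_right (pow_le_pow_left₀ ht0 h i) (pow_nonneg ht0 _)
  · refine mul_le_mul_of_nonpos_right ?_ (by linarith)
    calc (∑ i ∈ range q, t ^ i * t0 ^ (q - 1 - i))
        ≤ ∑ i ∈ range q, t0 ^ i * t0 ^ (q - 1 - i) := by
          refine Finset.sum_le_sum fun i _ => ?_
          exact mul_le_mul_of_nonneg_right (pow_le_pow_left₀ ht h i) (pow_nonneg ht0 _)
      _ = (q : ℝ) * t0 ^ (q - 1) := by
          rw [Finset.sum_congr rfl hsum, Finset.sum_const, card_range, nsmul_eq_mul]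

lemma key_aux (q : ℕ) (hq : 1 ≤ q) {t t0 : ℝ} (ht : 0 < t) (ht0 : 0 < t0) :
    (q : ℝ) * t0 ^ q * (t / t0 - 1) ≤ t ^ q - t0 ^ q := by
  have h2 : (q : ℝ) * t0 ^ q * (t / t0 - 1) = (q : ℝ) * t0 ^ (q - 1) * (t - t0) := by
    have : t0 ^ q = t0 ^ (q - 1) * t0 := by
      rw [← pow_succ]; congr 1; omega
    rw [this]; field_simp
  rw [h2]
  exact tangent_le q hq ht.le ht0.le

lemma key_le (q : ℕ) (hq : 1 ≤ q) {c t t0 : ℝ} (ht : 0 < t) (ht0 : 0 < t0)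
    (hc : c = (q : ℝ) * t0 ^ q) :
    t0 ^ q - c * Real.log t0 ≤ t ^ q - c * Real.log t := by
  have h1 : c * Real.log (t / t0) ≤ c * (t / t0 - 1) := by
    refine mul_le_mul_of_nonneg_left (Real.log_le_sub_one_of_pos (div_pos ht ht0)) ?_
    rw [hc]; positivity
  have h2 := key_aux q hq ht ht0
  rw [hc] at h1 ⊢
  rw [Real.log_div ht.ne' ht0.ne', mul_sub] at h1
  linarith

lemma key_lt (q : ℕ) (hq : 1 ≤ q) {c t t0 : ℝ} (ht : 0 < t) (ht0 : 0 < t0)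
    (hc : c = (q : ℝ) * t0 ^ q) (hne : t ≠ t0) :
    t0 ^ q - c * Real.log t0 < t ^ q - c * Real.log t := by
  have hd1 : t / t0 ≠ 1 := by
    rw [Ne, div_eq_one_iff_eq ht0.ne']; exact hne
  have h1 : c * Real.log (t / t0) < c * (t / t0 - 1) := by
    refine mul_lt_mul_of_pos_left (Real.log_lt_sub_one_of_pos (div_pos ht ht0) hd1) ?_
    rw [hc]
    have : (1:ℝ) ≤ (q:ℝ) := by exact_mod_cast hq
    positivity
  have h2 := key_aux q hq ht ht0
  rw [hc] at h1 ⊢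
  rw [Real.log_div ht.ne' ht0.ne', mul_sub] at h1
  linarith

section MatrixLemmas

variable {n : Type*} [Fintype n] [DecidableEq n]

lemma my_posDef_of_det {M : Matrix n n ℝ} (h : M.PosSemidef) (hd : IsUnit M.det) : M.PosDef := by
  refine posDef_iff_dotProduct_mulVec.mpr ⟨h.1, fun x hx => ?_⟩
  refine lt_of_le_of_ne (h.dotProduct_mulVec_nonneg x) fun heq => hx ?_
  have h0 : M *ᵥ x = 0 := (h.dotProduct_mulVec_zero_iff x).mp heq.symm
  have := congrArg (fun v => M⁻¹ *ᵥ v) h0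
  simpa [Matrix.mulVec_mulVec, Matrix.nonsing_inv_mul M hd] using this

lemma my_conj_posDef {A S : Matrix n n ℝ} (hA : A.PosDef) (hS : S.IsHermitian)
    (hd : IsUnit S.det) : (S * A * S).PosDef := by
  have hkey : ∀ x : n → ℝ, star x ⬝ᵥ (S * A * S) *ᵥ x = star (S *ᵥ x) ⬝ᵥ A *ᵥ (S *ᵥ x) := by
    intro x
    simp only [star_mulVec, dotProduct_mulVec, vecMul_vecMul, hS.eq, Matrix.mul_assoc]
  refine posDef_iff_dotProduct_mulVec.mpr ⟨?_, fun x hx => ?_⟩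
  · have := Matrix.isHermitian_conjTranspose_mul_mul S hA.1
    rwa [hS.eq] at this
  · have hSx : S *ᵥ x ≠ 0 := by
      intro h0
      apply hx
      have := congrArg (fun v => S⁻¹ *ᵥ v) h0
      simpa [Matrix.mulVec_mulVec, Matrix.nonsing_inv_mul S hd] using this
    rw [hkey]
    exact (posDef_iff_dotProduct_mulVec.mp hA).2 hSx

lemma my_conj_pow {U D V : Matrix n n ℝ} (h1 : U * V = 1) (h2 : V * U = 1) (k : ℕ) :
    (U * D * V) ^ k = U * D ^ k * V := by
  induction k with
  | zero => simp [h1]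
  | succ k ih =>
    rw [pow_succ, pow_succ, ih]
    have h3 : (U * D ^ k * V) * (U * D * V) = U * D ^ k * ((V * U) * (D * V)) := by
      simp only [Matrix.mul_assoc]
    rw [h3, h2, one_mul]
    simp only [Matrix.mul_assoc]

lemma my_trace_pow {A : Matrix n n ℝ} (hA : A.IsHermitian) (k : ℕ) :
    (A ^ k).trace = ∑ i, hA.eigenvalues i ^ k := by
  have h1 : (hA.eigenvectorUnitary : Matrix n n ℝ) * star (hA.eigenvectorUnitary : Matrix n n ℝ) = 1 :=
    (Matrix.mem_unitaryGroup_iff).mp hA.eigenvectorUnitary.2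
  have h2 : star (hA.eigenvectorUnitary : Matrix n n ℝ) * (hA.eigenvectorUnitary : Matrix n n ℝ) = 1 :=
    (Matrix.mem_unitaryGroup_iff').mp hA.eigenvectorUnitary.2
  conv_lhs => rw [hA.spectral_theorem, Unitary.conjStarAlgAut_apply, my_conj_pow h1 h2]
  rw [Matrix.trace_mul_cycle, h2, one_mul]
  simp [Matrix.diagonal_pow, Matrix.trace_diagonal, RCLike.ofReal_real_eq_id]

lemma my_eq_smul_one {A : Matrix n n ℝ} (hA : A.IsHermitian) {t : ℝ}
    (h : ∀ i, hA.eigenvalues i = t) : A = t • 1 := by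
  have h1 : (hA.eigenvectorUnitary : Matrix n n ℝ) * star (hA.eigenvectorUnitary : Matrix n n ℝ) = 1 :=
    (Matrix.mem_unitaryGroup_iff).mp hA.eigenvectorUnitary.2
  have hd : diagonal (RCLike.ofReal ∘ hA.eigenvalues) = t • (1 : Matrix n n ℝ) := by
    have he : (RCLike.ofReal ∘ hA.eigenvalues : n → ℝ) = fun _ => t := by
      funext i; simp [h i]
    rw [he, smul_one_eq_diagonal]
  conv_lhs => rw [hA.spectral_theorem, Unitary.conjStarAlgAut_apply, hd]
  rw [mul_smul_comm, smul_mul_assoc, mul_one, h1]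

end MatrixLemmas

/-- The square root of a positive semidefinite matrix, as defined in the older Mathlib
(removed since then). -/
noncomputable def Matrix.PosSemidef.sqrt {n : Type*} [Fintype n] [DecidableEq n]
    {A : Matrix n n ℝ} (hA : A.PosSemidef) : Matrix n n ℝ :=
  hA.1.eigenvectorUnitary.1 * Matrix.diagonal ((↑) ∘ (√·) ∘ hA.1.eigenvalues) *
    (star hA.1.eigenvectorUnitary : Matrix n n ℝ)

lemma my_sqrt_psd {n : Type*} [Fintype n] [DecidableEq n]
    {A : Matrix n n ℝ} (hA : A.PosSemidef) : hA.sqrt.PosSemidef := by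
  unfold Matrix.PosSemidef.sqrt
  rw [Matrix.star_eq_conjTranspose]
  exact (PosSemidef.diagonal (fun i => by simp [Real.sqrt_nonneg])).mul_mul_conjTranspose_same _

lemma my_sqrt_mul_self {n : Type*} [Fintype n] [DecidableEq n]
    {A : Matrix n n ℝ} (hA : A.PosSemidef) : hA.sqrt * hA.sqrt = A := by
  have h2 : star (hA.1.eigenvectorUnitary : Matrix n n ℝ) * (hA.1.eigenvectorUnitary : Matrix n n ℝ) = 1 :=
    Unitary.coe_star_mul_self _
  unfold Matrix.PosSemidef.sqrt
  have h3 : ∀ D : Matrix n n ℝ, (hA.1.eigenvectorUnitary : Matrix n n ℝ) * D *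
      star (hA.1.eigenvectorUnitary : Matrix n n ℝ) * ((hA.1.eigenvectorUnitary : Matrix n n ℝ) * D *
      star (hA.1.eigenvectorUnitary : Matrix n n ℝ)) = (hA.1.eigenvectorUnitary : Matrix n n ℝ) * (D * D) *
      star (hA.1.eigenvectorUnitary : Matrix n n ℝ) := by
    intro D
    simp only [Matrix.mul_assoc]
    rw [← Matrix.mul_assoc (star _) _ (D * _), h2, Matrix.one_mul]
  rw [h3, diagonal_mul_diagonal]
  conv_rhs => rw [hA.1.spectral_theorem, Unitary.conjStarAlgAut_apply]
  congr 3
  funext i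
  simp [Real.mul_self_sqrt (hA.eigenvalues_nonneg i)]

/-- Let `p, q ≥ 1` be integers, `m ≥ p` real, `Ψ` symmetric positive definite.  Then
`f(B) = tr((Ψ^{−1/2} B Ψ^{−1/2})^{−q}) + (qm+p+1)·log det B` on positive definite matrices
attains a strict global minimum at `B = (q/(qm+p+1))^{1/q} · Ψ` (the mode of the power
inverse Wishart distribution). -/
theorem stmt_4 (p q : ℕ) (hp : 1 ≤ p) (hq : 1 ≤ q) (m : ℝ) (hm : (p : ℝ) ≤ m)
    (Ψ : Matrix (Fin p) (Fin p) ℝ) (hΨ : Ψ.PosDef)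
    (B : Matrix (Fin p) (Fin p) ℝ) (hB : B.PosDef)
    (hne : B ≠ (((q : ℝ) / ((q : ℝ) * m + (p : ℝ) + 1)) ^ ((1 : ℝ) / (q : ℝ))) • Ψ) :
    ((hΨ.posSemidef.sqrt⁻¹ *
          ((((q : ℝ) / ((q : ℝ) * m + (p : ℝ) + 1)) ^ ((1 : ℝ) / (q : ℝ))) • Ψ) *
            hΨ.posSemidef.sqrt⁻¹)⁻¹ ^ q).trace +
        ((q : ℝ) * m + (p : ℝ) + 1) *
          Real.log ((((q : ℝ) / ((q : ℝ) * m + (p : ℝ) + 1)) ^ ((1 : ℝ) / (q : ℝ))) • Ψ).det <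
      ((hΨ.posSemidef.sqrt⁻¹ * B * hΨ.posSemidef.sqrt⁻¹)⁻¹ ^ q).trace +
        ((q : ℝ) * m + (p : ℝ) + 1) * Real.log B.det := by
  have hq1 : (1 : ℝ) ≤ (q : ℝ) := by exact_mod_cast hq
  have hp1 : (1 : ℝ) ≤ (p : ℝ) := by exact_mod_cast hp
  set c : ℝ := (q : ℝ) * m + (p : ℝ) + 1 with hc_def
  have hc : 0 < c := by nlinarith
  have hqc : 0 < (q : ℝ) / c := div_pos (by linarith) hc
  set r : ℝ := ((q : ℝ) / c) ^ ((1 : ℝ) / (q : ℝ)) with hr_def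
  have hr : 0 < r := Real.rpow_pos_of_pos hqc _
  have hrq : r ^ q = (q : ℝ) / c := by
    rw [hr_def, ← Real.rpow_natCast (((q : ℝ) / c) ^ ((1:ℝ)/(q:ℝ))) q, ← Real.rpow_mul hqc.le]
    rw [one_div_mul_cancel (by positivity : (q:ℝ) ≠ 0), Real.rpow_one]
  -- matrix square root facts
  set Q : Matrix (Fin p) (Fin p) ℝ := hΨ.posSemidef.sqrt with hQ_def
  have hQps : Q.PosSemidef := my_sqrt_psd hΨ.posSemidef
  have hQQ : Q * Q = Ψ := my_sqrt_mul_self hΨ.posSemidef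
  have hdQ2 : Q.det * Q.det = Ψ.det := by rw [← Matrix.det_mul, hQQ]
  have hdQ : IsUnit Q.det := by
    refine isUnit_iff_ne_zero.mpr fun h0 => ?_
    rw [h0, mul_zero] at hdQ2
    exact hΨ.det_pos.ne hdQ2
  have hQpd : Q.PosDef := my_posDef_of_det hQps hdQ
  set S : Matrix (Fin p) (Fin p) ℝ := Q⁻¹ with hS_def
  have hSpd : S.PosDef := hQpd.inv
  have hdS : IsUnit S.det := isUnit_iff_ne_zero.mpr hSpd.det_pos.ne'
  have hQS : Q * S = 1 := Matrix.mul_nonsing_inv Q hdQ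
  have hSQ : S * Q = 1 := Matrix.nonsing_inv_mul Q hdQ
  have hSΨS : S * Ψ * S = 1 := by
    rw [← hQQ]
    calc S * (Q * Q) * S = (S * Q) * (Q * S) := by simp only [Matrix.mul_assoc]
      _ = 1 := by rw [hSQ, hQS, one_mul]
  -- LHS computation
  have hX0 : S * (r • Ψ) * S = r • (1 : Matrix (Fin p) (Fin p) ℝ) := by
    rw [Matrix.mul_smul, Matrix.smul_mul, hSΨS]
  have hX0inv : (r • (1 : Matrix (Fin p) (Fin p) ℝ))⁻¹ = r⁻¹ • 1 := by
    refine Matrix.inv_eq_right_inv ?_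
    rw [Matrix.smul_mul, Matrix.mul_smul, one_mul, smul_smul, mul_inv_cancel₀ hr.ne', one_smul]
  have hLtrace : ((S * (r • Ψ) * S)⁻¹ ^ q).trace = c / q * p := by
    rw [hX0, hX0inv, smul_pow, one_pow, Matrix.trace_smul, Matrix.trace_one]
    rw [inv_pow, hrq, inv_div]
    simp [smul_eq_mul, Fintype.card_fin]
  have hLdet : Real.log ((r • Ψ).det) = p * Real.log r + Real.log Ψ.det := by
    rw [Matrix.det_smul, Fintype.card_fin, Real.log_mul (by positivity) hΨ.det_pos.ne',
      Real.log_pow]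
  -- RHS setup
  set X : Matrix (Fin p) (Fin p) ℝ := S * B * S with hX_def
  have hXpd : X.PosDef := my_conj_posDef hB hSpd.1 hdS
  have hdX : IsUnit X.det := isUnit_iff_ne_zero.mpr hXpd.det_pos.ne'
  have hYpd : X⁻¹.PosDef := hXpd.inv
  set μ : Fin p → ℝ := hYpd.1.eigenvalues with hμ_def
  have hμpos : ∀ i, 0 < μ i := fun i => hYpd.eigenvalues_pos i
  have hRtrace : ((X⁻¹) ^ q).trace = ∑ i, μ i ^ q := my_trace_pow hYpd.1 q
  have hdetY : X⁻¹.det = ∏ i, μ i := by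
    have := hYpd.1.det_eq_prod_eigenvalues
    simpa using this
  have hdetX : X.det = (∏ i, μ i)⁻¹ := by
    have h1 : X.det * X⁻¹.det = 1 := by
      rw [← Matrix.det_mul, Matrix.mul_nonsing_inv X hdX, Matrix.det_one]
    rw [hdetY] at h1
    exact eq_inv_of_mul_eq_one_left h1
  -- B = Q * X * Q
  have hBX : Q * X * Q = B := by
    calc Q * (S * B * S) * Q = (Q * S) * B * (S * Q) := by simp only [Matrix.mul_assoc]
      _ = B := by rw [hQS, hSQ, one_mul, mul_one]
  have hdetB : B.det = Ψ.det * X.det := by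
    rw [← hBX, Matrix.det_mul, Matrix.det_mul]
    rw [← hdQ2]; ring
  have hlogB : Real.log B.det = Real.log Ψ.det + Real.log X.det :=
    Real.log_mul hΨ.det_pos.ne' hXpd.det_pos.ne' ▸ by rw [hdetB, Real.log_mul hΨ.det_pos.ne' hXpd.det_pos.ne']
  have hlogX : Real.log X.det = -∑ i, Real.log (μ i) := by
    rw [hdetX, Real.log_inv, Real.log_prod fun i _ => (hμpos i).ne']
  -- eigenvalue target
  set t0 : ℝ := r⁻¹ with ht0_def
  have ht0pos : 0 < t0 := inv_pos.mpr hr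
  have ht0q : t0 ^ q = c / q := by rw [ht0_def, inv_pow, hrq, inv_div]
  have hc_eq : c = (q : ℝ) * t0 ^ q := by
    rw [ht0q]; field_simp
  have hlogr : Real.log r = -Real.log t0 := by
    rw [ht0_def, Real.log_inv, neg_neg]
  -- existence of eigenvalue ≠ t0
  have hex : ∃ j, μ j ≠ t0 := by
    by_contra hall
    push_neg at hall
    have hY1 : X⁻¹ = t0 • 1 := my_eq_smul_one hYpd.1 hall
    have hX1 : X = r • 1 := by
      have h1 : X = (X⁻¹)⁻¹ := (Matrix.nonsing_inv_nonsing_inv X hdX).symm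
      rw [h1, hY1]
      refine Matrix.inv_eq_right_inv ?_
      rw [Matrix.smul_mul, Matrix.mul_smul, one_mul, smul_smul, ht0_def,
        inv_mul_cancel₀ hr.ne', one_smul]
    apply hne
    rw [← hBX, hX1, Matrix.mul_smul, Matrix.smul_mul, mul_one, hQQ]
  obtain ⟨j, hj⟩ := hex
  -- final inequality
  have hsum : ∑ _i : Fin p, (t0 ^ q - c * Real.log t0) <
      ∑ i, (μ i ^ q - c * Real.log (μ i)) := by
    refine Finset.sum_lt_sum (fun i _ => key_le q hq (hμpos i) ht0pos hc_eq) ⟨j, Finset.mem_univ j, key_lt q hq (hμpos j) ht0pos hc_eq hj⟩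
  rw [Finset.sum_const, Finset.card_univ, Fintype.card_fin, nsmul_eq_mul,
    Finset.sum_sub_distrib, ← Finset.mul_sum] at hsum
  rw [hLtrace, hLdet, hRtrace, hlogB, hlogX, hlogr, ht0q] at *
  nlinarith [hsum]
end

section
/- Let q ≥ 1 be an integer and let c > 0, d > 0, s ≥ 0 be real numbers. Then there exists exactly one λ > 0 satisfying c·λ^q − s·λ^{q−1} − d = 0. Moreover, the polynomial λ ↦ c·λ^q − s·λ^{q−1} − d is strictly increasing on the set where it is nonnegative, so the root is the unique positive zero. -/
/-- Let `q ≥ 1` be an integer and `c > 0`, `d > 0`, `s ≥ 0` reals. Then there is exactly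
one `λ > 0` with `c·λ^q − s·λ^{q−1} − d = 0`; moreover the polynomial is strictly increasing
on the (positive) set where it is nonnegative. -/
theorem stmt_5 (q : ℕ) (hq : 1 ≤ q) (c d s : ℝ) (hc : 0 < c) (hd : 0 < d) (hs : 0 ≤ s) :
    (∃! lam : ℝ, 0 < lam ∧ c * lam ^ q - s * lam ^ (q - 1) - d = 0) ∧
      StrictMonoOn (fun lam : ℝ => c * lam ^ q - s * lam ^ (q - 1) - d)
        {lam : ℝ | 0 < lam ∧ 0 ≤ c * lam ^ q - s * lam ^ (q - 1) - d} := by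
  set t := s / c with ht
  have hct : c * t = s := by rw [ht]; field_simp
  have key : ∀ lam : ℝ, c * lam ^ q - s * lam ^ (q - 1) - d
      = c * (lam ^ (q - 1) * (lam - t)) - d := by
    intro lam
    have hpq : lam ^ q = lam ^ (q - 1) * lam := by
      rw [← pow_succ]; congr 1; omega
    rw [hpq, ← hct]; ring
  have hmono : StrictMonoOn (fun lam : ℝ => c * lam ^ q - s * lam ^ (q - 1) - d)
      {lam : ℝ | 0 < lam ∧ 0 ≤ c * lam ^ q - s * lam ^ (q - 1) - d} := by
    rintro x ⟨hx0, hxf⟩ y ⟨hy0, hyf⟩ hxy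
    simp only [key] at hxf ⊢
    have hxp : (0:ℝ) < x ^ (q - 1) := pow_pos hx0 _
    have hxt : 0 < x - t := by
      by_contra h
      push_neg at h
      have h1 : x ^ (q - 1) * (x - t) ≤ 0 := mul_nonpos_of_nonneg_of_nonpos hxp.le h
      nlinarith
    have hpow : x ^ (q - 1) ≤ y ^ (q - 1) := pow_le_pow_left₀ hx0.le hxy.le _
    have hlt : x ^ (q - 1) * (x - t) < y ^ (q - 1) * (y - t) :=
      mul_lt_mul' hpow (by linarith) hxt.le (pow_pos hy0 _)
    nlinarith
  refine ⟨?_, hmono⟩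
  have hcont : Continuous fun lam : ℝ => c * lam ^ q - s * lam ^ (q - 1) - d := by
    continuity
  have h0 : c * (0:ℝ) ^ q - s * 0 ^ (q - 1) - d < 0 := by
    have h1 : (0:ℝ) ^ q = 0 := zero_pow (by omega)
    have h2 : (0:ℝ) ≤ s * 0 ^ (q - 1) := mul_nonneg hs (pow_nonneg le_rfl _)
    nlinarith
  obtain ⟨M, hM1, hMroot⟩ : ∃ M : ℝ, 1 ≤ M ∧ 0 ≤ c * M ^ q - s * M ^ (q - 1) - d := by
    refine ⟨max 1 ((s + d) / c), le_max_left _ _, ?_⟩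
    set M := max 1 ((s + d) / c) with hM
    have hM1 : (1:ℝ) ≤ M := le_max_left _ _
    have hM2 : s + d ≤ c * M := by
      have := le_max_right 1 ((s + d) / c)
      calc s + d = c * ((s + d) / c) := by field_simp
        _ ≤ c * M := by exact mul_le_mul_of_nonneg_left this hc.le
    have hMp : (1:ℝ) ≤ M ^ (q - 1) := one_le_pow₀ hM1
    rw [key]
    have hMt : d ≤ c * (M - t) := by nlinarith
    nlinarith
  obtain ⟨x, hxmem, hfx⟩ :=
    intermediate_value_Icc (by linarith : (0:ℝ) ≤ M) hcont.continuousOn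
      (Set.mem_Icc.mpr ⟨h0.le, hMroot⟩)
  have hx0 : 0 < x := by
    rcases hxmem.1.lt_or_eq with h | h
    · exact h
    · exfalso; rw [← h] at hfx; simp only at hfx; linarith
  refine ⟨x, ⟨hx0, hfx⟩, fun y hy => ?_⟩
  exact hmono.injOn ⟨hy.1, hy.2.ge⟩ ⟨hx0, hfx.ge⟩ (hy.2.trans hfx.symm)
end

section
/- Let q ≥ 1 be an integer, c > 0, d > 0, s ≥ 0, and let λ > 0 be the unique positive solution of c·λ^q − s·λ^{q−1} − d = 0. Then λ ≤ s/c + (d/c)^{1/q}. In particular, the regularized eigenvalue produced by the power inverse Wishart MAP never exceeds the linear regularization with the same floor and the same shrinkage factor. -/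
/-- Let `q ≥ 1`, `c > 0`, `d > 0`, `s ≥ 0`, and let `λ > 0` solve
`c·λ^q − s·λ^{q−1} − d = 0`. Then `λ ≤ s/c + (d/c)^{1/q}`: the regularized eigenvalue
never exceeds the linear regularization with the same floor and shrinkage factor. -/
theorem stmt_7 (q : ℕ) (hq : 1 ≤ q) (c d s lam : ℝ) (hc : 0 < c) (hd : 0 < d) (hs : 0 ≤ s)
    (hlam : 0 < lam) (heq : c * lam ^ q - s * lam ^ (q - 1) - d = 0) :
    lam ≤ s / c + (d / c) ^ ((1 : ℝ) / (q : ℝ)) := by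
  by_contra h
  push_neg at h
  set t : ℝ := (d / c) ^ ((1 : ℝ) / (q : ℝ)) with ht_def
  have hdc : (0 : ℝ) < d / c := div_pos hd hc
  have ht : 0 < t := Real.rpow_pos_of_pos hdc _
  have hqne : (q : ℝ) ≠ 0 := Nat.cast_ne_zero.mpr (by omega)
  have htq : t ^ q = d / c := by
    rw [ht_def, ← Real.rpow_natCast ((d / c) ^ ((1 : ℝ) / (q : ℝ))) q,
      ← Real.rpow_mul hdc.le, one_div_mul_cancel hqne, Real.rpow_one]
  have hsc : (0 : ℝ) ≤ s / c := div_nonneg hs hc.le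
  have h1 : t ≤ lam := by linarith
  have hB : c * t < c * lam - s := by
    have h2 := mul_lt_mul_of_pos_left h hc
    rw [mul_add, mul_div_cancel₀ _ hc.ne'] at h2
    linarith
  have hpow : t ^ (q - 1) ≤ lam ^ (q - 1) := pow_le_pow_left₀ ht.le h1 _
  have hlamq : lam ^ q = lam ^ (q - 1) * lam := by
    rw [← pow_succ]; congr 1; omega
  have htq' : t ^ q = t ^ (q - 1) * t := by
    rw [← pow_succ]; congr 1; omega
  have hd' : lam ^ (q - 1) * (c * lam - s) = d := by
    have := heq
    rw [hlamq] at this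
    ring_nf at this ⊢
    linarith
  have htpos : 0 < t ^ (q - 1) := pow_pos ht _
  have hct : 0 < c * t := mul_pos hc ht
  have : d < d := by
    calc d = c * (d / c) := by field_simp
    _ = c * t ^ q := by rw [htq]
    _ = t ^ (q - 1) * (c * t) := by rw [htq']; ring
    _ < t ^ (q - 1) * (c * lam - s) := by
        exact mul_lt_mul_of_pos_left hB htpos
    _ ≤ lam ^ (q - 1) * (c * lam - s) := by
        exact mul_le_mul_of_nonneg_right hpow (by linarith)
    _ = d := hd'
  exact lt_irrefl _ this
end

section
/- Let q ≥ 2 be an integer, c > 0, d > 0, and for s ≥ 0 let g(s) denote the unique positive solution of c·λ^q − s·λ^{q−1} − d = 0. Then g is strictly increasing and strictly convex on [0, ∞). -/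
/-- Let `q ≥ 2`, `c > 0`, `d > 0`, and for `s ≥ 0` let `g s` be the unique positive
solution of `c·λ^q − s·λ^{q−1} − d = 0`.  Then `g` is strictly increasing and strictly
convex on `[0, ∞)`. -/
theorem stmt_8 (q : ℕ) (hq : 2 ≤ q) (c d : ℝ) (hc : 0 < c) (hd : 0 < d) (g : ℝ → ℝ)
    (hg : ∀ s, 0 ≤ s → 0 < g s ∧ c * g s ^ q - s * g s ^ (q - 1) - d = 0) :
    StrictMonoOn g (Set.Ici 0) ∧ StrictConvexOn ℝ (Set.Ici 0) g := by
  set m : ℤ := -(q - 1 : ℕ) with hm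
  have hq1 : 1 ≤ q - 1 := by omega
  set h : ℝ → ℝ := fun x => c * x - d / x ^ (q - 1) with hh
  -- g is a right inverse of h
  have key : ∀ s, 0 ≤ s → h (g s) = s := by
    intro s hs
    obtain ⟨hpos, heq⟩ := hg s hs
    have hne : g s ^ (q - 1) ≠ 0 := pow_ne_zero _ (ne_of_gt hpos)
    have hpow : g s ^ q = g s ^ (q - 1) * g s := by
      rw [← pow_succ]; congr 1; omega
    simp only [hh]
    field_simp
    linear_combination heq - c * hpow
  -- h is strictly increasing on positives
  have hlt : ∀ a b : ℝ, 0 < a → a < b → h a < h b := by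
    intro a b ha hab
    have hb : 0 < b := ha.trans hab
    have h1 : a ^ (q - 1) < b ^ (q - 1) :=
      pow_lt_pow_left₀ hab ha.le (by omega)
    have h2 : d / b ^ (q - 1) < d / a ^ (q - 1) :=
      div_lt_div_of_pos_left hd (pow_pos ha _) h1
    have h3 : c * a < c * b := by nlinarith
    simp only [hh]
    linarith
  -- rewrite the division as a zpow
  have hdiv : ∀ x : ℝ, 0 < x → d / x ^ (q - 1) = d * x ^ m := by
    intro x hx
    rw [hm, zpow_neg, zpow_natCast, div_eq_mul_inv]
  -- strict concavity of h on positives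
  have conc : ∀ a b : ℝ, 0 < a → 0 < b → a ≠ b → ∀ t u : ℝ, 0 < t → 0 < u →
      t + u = 1 → t * h a + u * h b < h (t * a + u * b) := by
    intro a b ha hb hab t u ht hu htu
    have hm0 : m ≠ 0 := by simp [hm]; omega
    have hm1 : m ≠ 1 := by simp [hm]; omega
    have fcon := (strictConvexOn_zpow hm0 hm1).2 (Set.mem_Ioi.2 ha) (Set.mem_Ioi.2 hb)
      hab ht hu htu
    simp only [smul_eq_mul] at fcon
    have hcombo : 0 < t * a + u * b := by positivity
    have hmul := mul_lt_mul_of_pos_left fcon hd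
    simp only [hh]
    rw [hdiv a ha, hdiv b hb, hdiv _ hcombo]
    nlinarith [hmul]
  have gmono : StrictMonoOn g (Set.Ici 0) := by
    intro x hx y hy hxy
    have hgx := (hg x hx).1
    have hgy := (hg y hy).1
    rcases lt_trichotomy (g x) (g y) with h1 | h1 | h1
    · exact h1
    · exfalso
      have : x = y := by rw [← key x hx, ← key y hy, h1]
      exact absurd this (ne_of_lt hxy)
    · exfalso
      have := hlt (g y) (g x) hgy h1
      rw [key x hx, key y hy] at this
      linarith
  refine ⟨gmono, convex_Ici 0, ?_⟩
  intro x hx y hy hxy a b ha hb hab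
  have hgx := (hg x hx).1
  have hgy := (hg y hy).1
  have hx0 : (0:ℝ) ≤ x := hx
  have hy0 : (0:ℝ) ≤ y := hy
  have hs : (0:ℝ) ≤ a * x + b * y := by positivity
  have hgs := (hg _ hs).1
  have hgne : g x ≠ g y := by
    intro hgeq
    apply hxy
    rw [← key x hx, ← key y hy, hgeq]
  have hp : 0 < a * g x + b * g y := by positivity
  have hcon := conc (g x) (g y) hgx hgy hgne a b ha hb hab
  rw [key x hx, key y hy] at hcon
  have hkey := key _ hs
  simp only [smul_eq_mul]
  by_contra hle
  push_neg at hle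
  rcases eq_or_lt_of_le hle with h1 | h1
  · rw [← h1] at hkey
    linarith [hkey, hcon]
  · have := hlt _ _ hp h1
    rw [hkey] at this
    linarith
end

section
/- Let q ≥ 1 be an integer, c > 0, d > 0, and for s ≥ 0 let g(s) denote the unique positive solution of c·λ^q − s·λ^{q−1} − d = 0. Then g is differentiable at every s ≥ 0 with derivative g'(s) = g(s)/(q·c·g(s) − (q−1)·s), and this derivative is strictly positive. -/
open Set

private lemma aux_mono {c d : ℝ} (hc : 0 < c) (hd : 0 < d) (r : ℕ) :
    StrictMonoOn (fun x : ℝ => c * x - d / x ^ r) (Set.Ioi 0) := by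
  intro a ha b hb hab
  simp only [mem_Ioi] at ha hb
  have h1 : d / b ^ r ≤ d / a ^ r :=
    div_le_div_of_nonneg_left hd.le (pow_pos ha r) (pow_le_pow_left₀ ha.le hab.le r)
  have h2 : c * a < c * b := by nlinarith
  simp only
  linarith

private lemma aux_exists {c d : ℝ} (hc : 0 < c) (hd : 0 < d) (r : ℕ) {s : ℝ} (hs : -d < s) :
    ∃ x : ℝ, 0 < x ∧ c * x - d / x ^ r = s := by
  set a : ℝ := min 1 ((s + d) / c) with ha_def
  set b : ℝ := max 1 ((s + d) / c) with hb_def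
  have hsd : 0 < s + d := by linarith
  have ha0 : 0 < a := lt_min one_pos (div_pos hsd hc)
  have hab : a ≤ b := min_le_max
  have hb1 : (1:ℝ) ≤ b := le_max_left _ _
  have hcont : ContinuousOn (fun x : ℝ => c * x - d / x ^ r) (Icc a b) := by
    apply ContinuousOn.sub (by fun_prop)
    apply ContinuousOn.div continuousOn_const (by fun_prop)
    intro x hx
    exact pow_ne_zero r (lt_of_lt_of_le ha0 hx.1).ne'
  have hfa : c * a - d / a ^ r ≤ s := by
    have har : a ^ r ≤ 1 := pow_le_one₀ ha0.le (min_le_left _ _)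
    have : d ≤ d / a ^ r := by
      rw [le_div_iff₀ (pow_pos ha0 r)]
      nlinarith
    have hca : c * a ≤ s + d := by
      calc c * a ≤ c * ((s + d)/c) := by
            have := min_le_right (1:ℝ) ((s + d)/c); nlinarith
        _ = s + d := by field_simp
    linarith
  have hfb : s ≤ c * b - d / b ^ r := by
    have hbr : (1:ℝ) ≤ b ^ r := one_le_pow₀ hb1
    have : d / b ^ r ≤ d := by
      rw [div_le_iff₀ (by positivity)]
      nlinarith
    have hcb : s + d ≤ c * b := by
      calc s + d = c * ((s + d)/c) := by field_simp
        _ ≤ c * b := by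
            have := le_max_right (1:ℝ) ((s + d)/c); nlinarith
    linarith
  obtain ⟨x, hx, hfx⟩ := intermediate_value_Icc hab hcont (Set.mem_Icc.mpr ⟨hfa, hfb⟩)
  exact ⟨x, lt_of_lt_of_le ha0 hx.1, hfx⟩

/-- Let `q ≥ 1`, `c > 0`, `d > 0`, and for `s ≥ 0` let `g s` be the unique positive
solution of `c·λ^q − s·λ^{q−1} − d = 0`.  Then `g` is differentiable at every `s ≥ 0`
(within `[0,∞)`) with strictly positive derivative `g(s)/(q·c·g(s) − (q−1)·s)`. -/
theorem stmt_9 (q : ℕ) (hq : 1 ≤ q) (c d : ℝ) (hc : 0 < c) (hd : 0 < d) (g : ℝ → ℝ)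
    (hg : ∀ s, 0 ≤ s → 0 < g s ∧ c * g s ^ q - s * g s ^ (q - 1) - d = 0) :
    ∀ s, 0 ≤ s →
      HasDerivWithinAt g (g s / ((q : ℝ) * c * g s - ((q : ℝ) - 1) * s)) (Set.Ici 0) s ∧
        0 < g s / ((q : ℝ) * c * g s - ((q : ℝ) - 1) * s) := by
  classical
  obtain ⟨r, rfl⟩ : ∃ r, q = r + 1 := ⟨q - 1, by omega⟩
  simp only [Nat.add_sub_cancel] at hg ⊢
  set h : ℝ → ℝ := fun x => c * x - d / x ^ r with hh_def
  have hmono : StrictMonoOn h (Ioi 0) := aux_mono hc hd r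
  -- relation between h and the polynomial equation
  have hkey : ∀ x : ℝ, 0 < x → ∀ s : ℝ,
      c * x ^ (r + 1) - s * x ^ r - d = (h x - s) * x ^ r := by
    intro x hx s
    have hxr : x ^ r ≠ 0 := pow_ne_zero r hx.ne'
    field_simp [hh_def]
    have e : x ^ r * (d / x ^ r) = d := by field_simp
    simp only [hh_def]
    linear_combination e
  -- root function on (-d, ∞)
  set G : ℝ → ℝ := fun s => if hs : ∃ x : ℝ, 0 < x ∧ h x = s then hs.choose else 1 with hG_def
  have hG : ∀ s : ℝ, -d < s → 0 < G s ∧ h (G s) = s := by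
    intro s hs
    have hex : ∃ x : ℝ, 0 < x ∧ h x = s := aux_exists hc hd r hs
    simp only [hG_def, dif_pos hex]
    exact hex.choose_spec
  have huniq : ∀ s : ℝ, ∀ x : ℝ, 0 < x → h x = s → G s = x := by
    intro s x hx hxs
    have hex : ∃ x : ℝ, 0 < x ∧ h x = s := ⟨x, hx, hxs⟩
    simp only [hG_def, dif_pos hex]
    exact hmono.injOn hex.choose_spec.1 hx (hex.choose_spec.2.trans hxs.symm)
  have hagree : ∀ s : ℝ, 0 ≤ s → G s = g s := by
    intro s hs
    obtain ⟨hgs, heq⟩ := hg s hs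
    refine huniq s (g s) hgs ?_
    have := hkey (g s) hgs s
    rw [heq] at this
    have hxr : (0:ℝ) < g s ^ r := pow_pos hgs r
    nlinarith [this]
  have hGmono : StrictMonoOn G (Ioi (-d)) := by
    intro a ha b hb hab
    obtain ⟨ha0, ha1⟩ := hG a ha
    obtain ⟨hb0, hb1⟩ := hG b hb
    by_contra hle
    push_neg at hle
    have := (hmono.le_iff_le hb0 ha0).mpr hle
    rw [ha1, hb1] at this
    exact absurd hab (not_lt.mpr this)
  intro s hs
  obtain ⟨hgs, heq⟩ := hg s hs
  set x := g s with hx_def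
  have hsd : -d < s := by linarith
  have hGs : G s = x := hagree s hs
  have hhx : h x = s := by
    have := hkey x hgs s
    rw [heq] at this
    have hxr : (0:ℝ) < x ^ r := pow_pos hgs r
    nlinarith [this]
  -- continuity of G at s
  have hcont : ContinuousAt G s := by
    have hd2 : -d < -d / 2 := by linarith
    have hd2' : (-d/2 : ℝ) < s := by linarith
    have hGlt : G (-d/2) < G s := hGmono hd2 (by simpa using hsd) (by linarith)
    refine hGmono.continuousAt_of_image_mem_nhds (Ioi_mem_nhds hsd) ?_
    refine Filter.mem_of_superset (Ioi_mem_nhds hGlt) ?_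
    intro y hy
    have hy0 : 0 < y := lt_trans (hG _ hd2).1 hy
    have hhy : -d < h y := by
      have := hmono (mem_Ioi.mpr (hG _ hd2).1) (mem_Ioi.mpr hy0) hy
      rw [(hG _ hd2).2] at this
      exact lt_trans (by linarith) this
    exact ⟨h y, hhy, huniq _ y hy0 rfl⟩
  -- derivative of h at x
  set D : ℝ := c + d * ((r:ℝ) * x ^ (r - 1)) / (x ^ r) ^ 2 with hD_def
  have hDpos : 0 < D := by
    rw [hD_def]
    have h1 : 0 ≤ d * ((r:ℝ) * x ^ (r - 1)) / (x ^ r) ^ 2 := by positivity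
    exact add_pos_of_pos_of_nonneg hc h1
  have hder : HasDerivAt h D x := by
    have h1 : HasDerivAt (fun y : ℝ => c * y) c x := by
      simpa using (hasDerivAt_id x).const_mul c
    have h2 : HasDerivAt (fun y : ℝ => y ^ r) ((r:ℝ) * x ^ (r - 1)) x := hasDerivAt_pow r x
    have h3 : HasDerivAt (fun y : ℝ => d / y ^ r)
        ((0 * x ^ r - d * ((r:ℝ) * x ^ (r - 1))) / (x ^ r) ^ 2) x :=
      (hasDerivAt_const x d).div h2 (pow_ne_zero r hgs.ne')
    have := h1.sub h3
    refine this.congr_deriv ?_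
    rw [hD_def]
    ring
  -- the algebraic identity
  have hcxs : s < c * x := by
    have h1 : x ^ r * (c * x - s) = d := by
      have := heq
      rw [pow_succ] at this
      nlinarith [this]
    have hxr : (0:ℝ) < x ^ r := pow_pos hgs r
    nlinarith
  have hApos : 0 < ((r:ℝ) + 1) * c * x - (r:ℝ) * s := by
    have hr0 : (0:ℝ) ≤ (r:ℝ) := Nat.cast_nonneg r
    nlinarith
  have hDA : D = (((r:ℝ) + 1) * c * x - (r:ℝ) * s) / x := by
    have hrx : (r:ℝ) * x ^ (r - 1) * x = (r:ℝ) * x ^ r := by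
      cases r with
      | zero => simp
      | succ m => simp [pow_succ]; ring
    have hd' : d = c * x ^ r * x - s * x ^ r := by
      rw [pow_succ] at heq; linarith
    rw [hD_def, hd']
    have hxr : x ^ r ≠ 0 := pow_ne_zero r hgs.ne'
    field_simp
    nlinarith [hrx, sq_nonneg (x ^ r)]
  have hDinv : D⁻¹ = x / (((r:ℝ) + 1) * c * x - (r:ℝ) * s) := by
    rw [hDA, inv_div]
  -- assemble
  have hinv : HasDerivAt G D⁻¹ s := by
    refine HasDerivAt.of_local_left_inverse (f := h) hcont ?_ hDpos.ne' ?_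
    · rw [hGs]; exact hder
    · filter_upwards [Ioi_mem_nhds hsd] with y hy using (hG y hy).2
  have hcast : x / (((r:ℝ) + 1) * c * x - (r:ℝ) * s)
      = g s / ((((r:ℕ) + 1 : ℕ) : ℝ) * c * g s - ((((r:ℕ) + 1 : ℕ) : ℝ) - 1) * s) := by
    rw [← hx_def]
    push_cast
    ring_nf
  constructor
  · have hw := hinv.hasDerivWithinAt (s := Ici (0:ℝ))
    have hw2 := hw.congr (fun y hy => (hagree y hy).symm) (hagree s hs).symm
    rw [hDinv, hcast] at hw2
    exact hw2
  · rw [← hcast]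
    exact div_pos hgs hApos
end

section
/- Let A be a real symmetric positive semidefinite p×p matrix, let n, q be positive integers and c > 0 a real number. Then there exists exactly one real symmetric positive definite p×p matrix Υ satisfying n·A·Υ + q·Υ^q = c·I. Moreover this Υ commutes with A, and can be written as Υ = V·Δ·Vᵀ where V is any orthogonal matrix diagonalizing A with eigenvalues δ_1,…,δ_p, and Δ is diagonal with Δ_{ii} the unique positive solution of q·λ^q + n·δ_i·λ − c = 0. -/
open Matrix

variable {p : ℕ}

lemma stmt12_conj_pow {V D : Matrix (Fin p) (Fin p) ℝ} (hV : V * Vᵀ = 1) (k : ℕ) :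
    (V * D * Vᵀ) ^ k = V * D ^ k * Vᵀ := by
  have hV' : Vᵀ * V = 1 := mul_eq_one_comm.mp hV
  induction k with
  | zero => simp [hV]
  | succ k ih =>
    rw [pow_succ, ih, pow_succ]
    calc V * D ^ k * Vᵀ * (V * D * Vᵀ) = V * D ^ k * (Vᵀ * V) * D * Vᵀ := by
          noncomm_ring
      _ = V * (D ^ k * D) * Vᵀ := by rw [hV']; noncomm_ring

lemma scalar_unique (n q : ℕ) (hq : 0 < q) (d : ℝ) (hd : 0 ≤ d)
    {x y c : ℝ} (hx : 0 < x) (hy : 0 < y)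
    (hfx : (q : ℝ) * x ^ q + (n : ℝ) * d * x = c)
    (hfy : (q : ℝ) * y ^ q + (n : ℝ) * d * y = c) : x = y := by
  have key : ∀ a b : ℝ, 0 < a → a < b →
      (q:ℝ) * a ^ q + (n:ℝ) * d * a < (q:ℝ) * b ^ q + (n:ℝ) * d * b := by
    intro a b ha hab
    have h1 : a ^ q < b ^ q := pow_lt_pow_left₀ hab ha.le hq.ne'
    have hq0 : (0:ℝ) < (q:ℝ) := by exact_mod_cast hq
    have h2 : (n:ℝ) * d * a ≤ (n:ℝ) * d * b := by
      have : (0:ℝ) ≤ (n:ℝ) * d := mul_nonneg (Nat.cast_nonneg n) hd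
      nlinarith
    nlinarith
  rcases lt_trichotomy x y with h | h | h
  · exact absurd (hfx.trans hfy.symm) (ne_of_lt (key x y hx h))
  · exact h
  · exact absurd (hfy.trans hfx.symm) (ne_of_lt (key y x hy h))

lemma stmt12_key (n q : ℕ) (hn : 0 < n) (hq : 0 < q) (c : ℝ) (hc : 0 < c)
    (δ Δ : Fin p → ℝ) (hδ : ∀ i, 0 ≤ δ i)
    (hΔ : ∀ i, 0 < Δ i ∧ (q : ℝ) * Δ i ^ q + (n : ℝ) * δ i * Δ i - c = 0)
    (W : Matrix (Fin p) (Fin p) ℝ) (hW : W.PosDef)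
    (heq : (n : ℝ) • (diagonal δ * W) + (q : ℝ) • W ^ q = c • 1) :
    W = diagonal Δ := by
  set U : Matrix (Fin p) (Fin p) ℝ := (hW.1.eigenvectorUnitary : Matrix (Fin p) (Fin p) ℝ) with hU
  set μ : Fin p → ℝ := hW.1.eigenvalues with hμ
  have hμpos : ∀ i, 0 < μ i := hW.eigenvalues_pos
  have hspec : W = U * diagonal μ * Uᵀ := by
    have h := hW.1.spectral_theorem
    simpa [Matrix.star_eq_conjTranspose, conjTranspose_eq_transpose_of_trivial] using h
  have hUU : U * Uᵀ = 1 := by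
    have h := (Matrix.mem_unitaryGroup_iff).mp hW.1.eigenvectorUnitary.2
    simpa [Matrix.star_eq_conjTranspose, conjTranspose_eq_transpose_of_trivial] using h
  have hUU' : Uᵀ * U = 1 := mul_eq_one_comm.mp hUU
  set B : Matrix (Fin p) (Fin p) ℝ := Uᵀ * diagonal δ * U with hB
  -- conjugated equation
  have hBμ : (n : ℝ) • (B * diagonal μ) + (q : ℝ) • (diagonal μ) ^ q = c • 1 := by
    have h1 : Uᵀ * ((n : ℝ) • (diagonal δ * W) + (q : ℝ) • W ^ q) * U
        = Uᵀ * (c • (1 : Matrix (Fin p) (Fin p) ℝ)) * U := by rw [heq]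
    have h2 : Uᵀ * (diagonal δ * W) * U = B * diagonal μ := by
      rw [hspec]
      calc Uᵀ * (diagonal δ * (U * diagonal μ * Uᵀ)) * U
          = (Uᵀ * diagonal δ * U) * diagonal μ * (Uᵀ * U) := by noncomm_ring
        _ = B * diagonal μ := by rw [hUU']; rw [Matrix.mul_one]
    have h3 : Uᵀ * W ^ q * U = (diagonal μ) ^ q := by
      rw [hspec, stmt12_conj_pow hUU]
      calc Uᵀ * (U * (diagonal μ) ^ q * Uᵀ) * U
          = (Uᵀ * U) * (diagonal μ) ^ q * (Uᵀ * U) := by noncomm_ring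
        _ = (diagonal μ) ^ q := by rw [hUU']; simp
    calc (n : ℝ) • (B * diagonal μ) + (q : ℝ) • (diagonal μ) ^ q
        = Uᵀ * ((n : ℝ) • (diagonal δ * W) + (q : ℝ) • W ^ q) * U := by
          rw [Matrix.mul_add, Matrix.add_mul, Matrix.mul_smul, Matrix.mul_smul,
            Matrix.smul_mul, Matrix.smul_mul, h2, h3]
      _ = Uᵀ * (c • (1 : Matrix (Fin p) (Fin p) ℝ)) * U := h1
      _ = c • 1 := by rw [Matrix.mul_smul, Matrix.smul_mul, Matrix.mul_one, hUU']
  have hent : ∀ i j, (n : ℝ) * (B i j * μ j)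
      + (q : ℝ) * (diagonal (fun i => μ i ^ q) i j) = c * (if i = j then 1 else 0) := by
    intro i j
    have := congrFun (congrFun hBμ i) j
    show _ + (q : ℝ) * (diagonal (μ ^ q) i j) = _
    simpa [Matrix.add_apply, Matrix.smul_apply, Matrix.mul_diagonal, Matrix.diagonal_pow,
      Matrix.one_apply, smul_eq_mul, mul_ite] using this
  have hBoff : ∀ i j, i ≠ j → B i j = 0 := by
    intro i j hij
    have h := hent i j
    rw [diagonal_apply_ne _ hij, if_neg hij] at h
    have hn0 : (0:ℝ) < (n:ℝ) := by exact_mod_cast hn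
    have h0 : (n:ℝ) * (B i j * μ j) = 0 := by linarith
    rcases mul_eq_zero.mp h0 with h' | h'
    · exact absurd h' hn0.ne'
    · rcases mul_eq_zero.mp h' with h'' | h''
      · exact h''
      · exact absurd h'' (hμpos j).ne'
  have hBd : ∀ i, (q : ℝ) * μ i ^ q + (n : ℝ) * B i i * μ i = c := by
    intro i
    have h := hent i i
    rw [diagonal_apply_eq, if_pos rfl] at h
    ring_nf at h ⊢
    linarith
  -- B i i = coefficient, nonneg
  have hBnn : ∀ i, 0 ≤ B i i := by
    intro i
    have hBii : B i i = ∑ k, U k i * (δ k * U k i) := by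
      rw [hB, Matrix.mul_assoc, Matrix.mul_apply]
      refine Finset.sum_congr rfl fun k _ => ?_
      rw [Matrix.transpose_apply, Matrix.diagonal_mul]
    rw [hBii]
    exact Finset.sum_nonneg fun k _ => by nlinarith [hδ k, sq_nonneg (U k i)]
  -- commutation: δ k * U k i = U k i * B i i
  have hcomm : ∀ k i, δ k * U k i = U k i * B i i := by
    intro k i
    have hUB : diagonal δ * U = U * B := by
      rw [hB]
      calc diagonal δ * U = (U * Uᵀ) * diagonal δ * U := by rw [hUU, Matrix.one_mul]
        _ = U * (Uᵀ * diagonal δ * U) := by noncomm_ring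
    have h := congrFun (congrFun hUB k) i
    rw [Matrix.diagonal_mul, Matrix.mul_apply] at h
    rw [Finset.sum_eq_single i] at h
    · exact h
    · intro b _ hb; rw [hBoff b i hb]; ring
    · intro h'; exact absurd (Finset.mem_univ i) h'
  have hΔμ : ∀ k i, Δ k * U k i = U k i * μ i := by
    intro k i
    by_cases h : U k i = 0
    · simp [h]
    · have h1 : δ k * U k i = B i i * U k i := by rw [hcomm k i]; ring
      have hδB : δ k = B i i := mul_right_cancel₀ h h1
      have hx := hΔ k
      have hμroot : (q : ℝ) * μ i ^ q + (n : ℝ) * δ k * μ i = c := by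
        have := hBd i; rw [hδB]; linarith
      have hΔroot : (q : ℝ) * Δ k ^ q + (n : ℝ) * δ k * Δ k = c := by linarith [hx.2]
      have heq' := scalar_unique n q hq (δ k) (hδ k) hx.1 (hμpos i) hΔroot hμroot
      rw [heq']; ring
  have hfinal : diagonal Δ * U = U * diagonal μ := by
    ext k i
    rw [Matrix.diagonal_mul, Matrix.mul_diagonal]
    exact hΔμ k i
  calc W = U * diagonal μ * Uᵀ := hspec
    _ = (diagonal Δ * U) * Uᵀ := by rw [hfinal]
    _ = diagonal Δ := by rw [Matrix.mul_assoc, hUU, Matrix.mul_one]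

lemma scalar_exists (n q : ℕ) (hq : 0 < q) (c : ℝ) (hc : 0 < c)
    (d : ℝ) (hd : 0 ≤ d) :
    ∃ x : ℝ, 0 < x ∧ (q : ℝ) * x ^ q + (n : ℝ) * d * x = c := by
  set M : ℝ := max 1 c with hM
  have h1M : (1:ℝ) ≤ M := le_max_left _ _
  have h0M : (0:ℝ) ≤ M := le_trans zero_le_one h1M
  have hcont : ContinuousOn (fun x : ℝ => (q:ℝ) * x ^ q + (n:ℝ) * d * x) (Set.Icc 0 M) := by
    fun_prop
  have hmem : c ∈ Set.Icc ((q:ℝ) * (0:ℝ) ^ q + (n:ℝ) * d * 0) ((q:ℝ) * M ^ q + (n:ℝ) * d * M) := by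
    constructor
    · simp [zero_pow hq.ne']
      positivity
    · have hq1 : (1:ℝ) ≤ (q:ℝ) := by exact_mod_cast hq
      have h2 : c ≤ M ^ q := le_trans (le_max_right _ _) (le_self_pow₀ h1M hq.ne')
      nlinarith [mul_nonneg (mul_nonneg (Nat.cast_nonneg n : (0:ℝ) ≤ n) hd) h0M,
        pow_nonneg h0M q]
  obtain ⟨x, hx, hfx⟩ := intermediate_value_Icc h0M hcont hmem
  refine ⟨x, ?_, hfx⟩
  rcases eq_or_lt_of_le hx.1 with h | h
  · exfalso; rw [← h] at hfx; simp [zero_pow hq.ne'] at hfx; linarith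
  · exact h

lemma stmt12_posDef_conj {V W : Matrix (Fin p) (Fin p) ℝ} (hW : W.PosDef) (hV : V * Vᵀ = 1) :
    (V * W * Vᵀ).PosDef := by
  have hWs : Wᵀ = W := by simpa [conjTranspose_eq_transpose_of_trivial] using hW.1.eq
  refine Matrix.PosDef.of_dotProduct_mulVec_pos ?_ ?_
  · show (V * W * Vᵀ)ᴴ = _
    rw [conjTranspose_eq_transpose_of_trivial]
    simp [Matrix.transpose_mul, hWs, Matrix.mul_assoc]
  · intro x hx
    have hxV : Vᵀ *ᵥ x ≠ 0 := by
      intro h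
      apply hx
      have : V *ᵥ (Vᵀ *ᵥ x) = 0 := by rw [h]; simp
      rwa [mulVec_mulVec, hV, one_mulVec] at this
    have := hW.dotProduct_mulVec_pos hxV
    convert this using 1
    simp only [star_trivial]
    rw [← mulVec_mulVec, ← mulVec_mulVec, dotProduct_mulVec, mulVec_transpose]

lemma stmt12_sol_eq (n q : ℕ) (hn : 0 < n) (hq : 0 < q) (c : ℝ) (hc : 0 < c)
    (A : Matrix (Fin p) (Fin p) ℝ) (hA : A.PosSemidef)
    (Υ : Matrix (Fin p) (Fin p) ℝ) (hΥ : Υ.PosDef)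
    (heq : (n : ℝ) • (A * Υ) + (q : ℝ) • Υ ^ q = c • 1)
    (V : Matrix (Fin p) (Fin p) ℝ) (δ Δ : Fin p → ℝ)
    (hV : V * Vᵀ = 1) (hAV : A = V * diagonal δ * Vᵀ)
    (hΔ : ∀ i, 0 < Δ i ∧ (q : ℝ) * Δ i ^ q + (n : ℝ) * δ i * Δ i - c = 0) :
    Υ = V * diagonal Δ * Vᵀ := by
  have hV' : Vᵀ * V = 1 := mul_eq_one_comm.mp hV
  have hdiag : diagonal δ = Vᵀ * A * V := by
    rw [hAV]
    symm
    calc Vᵀ * (V * diagonal δ * Vᵀ) * V = (Vᵀ * V) * diagonal δ * (Vᵀ * V) := by noncomm_ring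
      _ = diagonal δ := by rw [hV']; simp
  have hδ : ∀ i, 0 ≤ δ i := by
    have hPSD : (Vᵀ * A * V).PosSemidef := by
      have := hA.mul_mul_conjTranspose_same Vᵀ
      rwa [conjTranspose_eq_transpose_of_trivial, transpose_transpose] at this
    have hdPSD : (diagonal δ).PosSemidef := by rw [hdiag]; exact hPSD
    exact posSemidef_diagonal_iff.mp hdPSD
  set W := Vᵀ * Υ * V with hWdef
  have hVt : Vᵀ * Vᵀᵀ = 1 := by rwa [transpose_transpose]
  have hWpos : W.PosDef := by
    have := stmt12_posDef_conj hΥ hVt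
    rwa [transpose_transpose] at this
  have hWeq : (n : ℝ) • (diagonal δ * W) + (q : ℝ) • W ^ q = c • 1 := by
    have h2 : diagonal δ * W = Vᵀ * (A * Υ) * V := by
      rw [hdiag, hWdef]
      calc (Vᵀ * A * V) * (Vᵀ * Υ * V) = Vᵀ * A * (V * Vᵀ) * Υ * V := by noncomm_ring
        _ = Vᵀ * (A * Υ) * V := by rw [hV]; noncomm_ring
    have h3 : W ^ q = Vᵀ * Υ ^ q * V := by
      rw [hWdef]
      have h4 : Vᵀ * Υ * V = Vᵀ * Υ * Vᵀᵀ := by rw [transpose_transpose]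
      rw [h4, stmt12_conj_pow hVt, transpose_transpose]
    rw [h2, h3]
    calc (n:ℝ) • (Vᵀ * (A * Υ) * V) + (q:ℝ) • (Vᵀ * Υ ^ q * V)
        = Vᵀ * ((n:ℝ) • (A * Υ) + (q:ℝ) • Υ ^ q) * V := by
          rw [Matrix.mul_add, Matrix.add_mul, Matrix.mul_smul, Matrix.mul_smul,
            Matrix.smul_mul, Matrix.smul_mul]
      _ = Vᵀ * (c • 1) * V := by rw [heq]
      _ = c • 1 := by rw [Matrix.mul_smul, Matrix.smul_mul, Matrix.mul_one, hV']
  have hW := stmt12_key n q hn hq c hc δ Δ hδ hΔ W hWpos hWeq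
  calc Υ = (V * Vᵀ) * Υ * (V * Vᵀ) := by rw [hV]; simp
    _ = V * W * Vᵀ := by rw [hWdef]; noncomm_ring
    _ = V * diagonal Δ * Vᵀ := by rw [hW]

/-- Let `A` be real symmetric positive semidefinite, `n, q` positive integers, `c > 0`.
Then there is exactly one symmetric positive definite `Υ` with `n·A·Υ + q·Υ^q = c·I`;
it commutes with `A` and equals `V·Δ·Vᵀ` for any orthogonal `V` diagonalizing `A` with
eigenvalues `δ_i`, where `Δ` is diagonal with `Δ_{ii}` the unique positive solution of
`q·λ^q + n·δ_i·λ − c = 0`. -/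
theorem stmt_12 (p n q : ℕ) (hn : 0 < n) (hq : 0 < q) (c : ℝ) (hc : 0 < c)
    (A : Matrix (Fin p) (Fin p) ℝ) (hA : A.PosSemidef) :
    (∃! Υ : Matrix (Fin p) (Fin p) ℝ,
        Υ.PosDef ∧
          (n : ℝ) • (A * Υ) + (q : ℝ) • Υ ^ q = c • (1 : Matrix (Fin p) (Fin p) ℝ)) ∧
      ∀ Υ : Matrix (Fin p) (Fin p) ℝ, Υ.PosDef →
        (n : ℝ) • (A * Υ) + (q : ℝ) • Υ ^ q = c • (1 : Matrix (Fin p) (Fin p) ℝ) →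
          A * Υ = Υ * A ∧
            ∀ (V : Matrix (Fin p) (Fin p) ℝ) (δ Δ : Fin p → ℝ),
              V * Vᵀ = 1 → A = V * Matrix.diagonal δ * Vᵀ →
                (∀ i, 0 < Δ i ∧ (q : ℝ) * Δ i ^ q + (n : ℝ) * δ i * Δ i - c = 0) →
                  Υ = V * Matrix.diagonal Δ * Vᵀ := by
  have hH := hA.1
  set V₀ : Matrix (Fin p) (Fin p) ℝ := (hH.eigenvectorUnitary : Matrix (Fin p) (Fin p) ℝ)
    with hV₀def
  set δ₀ : Fin p → ℝ := hH.eigenvalues with hδ₀def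
  have hδ₀ : ∀ i, 0 ≤ δ₀ i := hA.eigenvalues_nonneg
  have hAspec : A = V₀ * diagonal δ₀ * V₀ᵀ := by
    have h := hH.spectral_theorem
    simpa [Matrix.star_eq_conjTranspose, conjTranspose_eq_transpose_of_trivial] using h
  have hV₀ : V₀ * V₀ᵀ = 1 := by
    have h := (Matrix.mem_unitaryGroup_iff).mp hH.eigenvectorUnitary.2
    simpa [Matrix.star_eq_conjTranspose, conjTranspose_eq_transpose_of_trivial] using h
  have hV₀' : V₀ᵀ * V₀ = 1 := mul_eq_one_comm.mp hV₀
  choose Δ₀ hΔ₀pos hΔ₀eq using fun i => scalar_exists n q hq c hc (δ₀ i) (hδ₀ i)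
  have hΔ₀ : ∀ i, 0 < Δ₀ i ∧ (q:ℝ) * Δ₀ i ^ q + (n:ℝ) * δ₀ i * Δ₀ i - c = 0 :=
    fun i => ⟨hΔ₀pos i, by linarith [hΔ₀eq i]⟩
  set Υ₀ := V₀ * diagonal Δ₀ * V₀ᵀ with hΥ₀def
  have hΥ₀pos : Υ₀.PosDef := stmt12_posDef_conj (posDef_diagonal_iff.mpr hΔ₀pos) hV₀
  have hΥ₀eq : (n:ℝ) • (A * Υ₀) + (q:ℝ) • Υ₀ ^ q = c • (1 : Matrix (Fin p) (Fin p) ℝ) := by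
    have h1 : A * Υ₀ = V₀ * (diagonal δ₀ * diagonal Δ₀) * V₀ᵀ := by
      rw [hAspec, hΥ₀def]
      calc (V₀ * diagonal δ₀ * V₀ᵀ) * (V₀ * diagonal Δ₀ * V₀ᵀ)
          = V₀ * diagonal δ₀ * (V₀ᵀ * V₀) * diagonal Δ₀ * V₀ᵀ := by noncomm_ring
        _ = V₀ * (diagonal δ₀ * diagonal Δ₀) * V₀ᵀ := by rw [hV₀']; noncomm_ring
    have h2 : Υ₀ ^ q = V₀ * (diagonal Δ₀) ^ q * V₀ᵀ := stmt12_conj_pow hV₀ q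
    rw [h1, h2]
    have h5 : (n:ℝ) • (V₀ * (diagonal δ₀ * diagonal Δ₀) * V₀ᵀ)
          + (q:ℝ) • (V₀ * (diagonal Δ₀)^q * V₀ᵀ)
        = V₀ * ((n:ℝ) • (diagonal δ₀ * diagonal Δ₀) + (q:ℝ) • (diagonal Δ₀)^q) * V₀ᵀ := by
      rw [Matrix.mul_add, Matrix.add_mul, Matrix.mul_smul, Matrix.mul_smul,
        Matrix.smul_mul, Matrix.smul_mul]
    rw [h5]
    have hd : (n:ℝ) • (diagonal δ₀ * diagonal Δ₀) + (q:ℝ) • (diagonal Δ₀)^q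
        = c • (1 : Matrix (Fin p) (Fin p) ℝ) := by
      ext i j
      by_cases hij : i = j
      · subst hij
        simp only [Matrix.add_apply, Matrix.smul_apply, diagonal_mul_diagonal,
          Matrix.diagonal_pow, diagonal_apply_eq, Matrix.one_apply_eq, smul_eq_mul, Pi.pow_apply]
        linarith [hΔ₀eq i]
      · simp only [Matrix.add_apply, Matrix.smul_apply, diagonal_mul_diagonal,
          Matrix.diagonal_pow, diagonal_apply_ne _ hij, Matrix.one_apply_ne hij,
          smul_eq_mul, mul_zero, add_zero]
    rw [hd, Matrix.mul_smul, Matrix.smul_mul, Matrix.mul_one, hV₀]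
  refine ⟨⟨Υ₀, ⟨hΥ₀pos, hΥ₀eq⟩, ?_⟩, ?_⟩
  · rintro Υ ⟨hΥ, heqΥ⟩
    exact stmt12_sol_eq n q hn hq c hc A hA Υ hΥ heqΥ V₀ δ₀ Δ₀ hV₀ hAspec hΔ₀
  · intro Υ hΥ heqΥ
    refine ⟨?_, fun V δ Δ hV hAV hΔ =>
      stmt12_sol_eq n q hn hq c hc A hA Υ hΥ heqΥ V δ Δ hV hAV hΔ⟩
    have hAs : Aᵀ = A := by simpa [conjTranspose_eq_transpose_of_trivial] using hA.1.eq
    have hΥs : Υᵀ = Υ := by simpa [conjTranspose_eq_transpose_of_trivial] using hΥ.1.eq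
    have h := congrArg Matrix.transpose heqΥ
    simp only [Matrix.transpose_add, Matrix.transpose_smul, Matrix.transpose_mul,
      Matrix.transpose_pow, hAs, hΥs, Matrix.transpose_one] at h
    have h2 : (n:ℝ) • (Υ * A) = (n:ℝ) • (A * Υ) := add_right_cancel (h.trans heqΥ.symm)
    have hn0 : (n:ℝ) ≠ 0 := by exact_mod_cast hn.ne'
    exact (smul_right_injective _ hn0 h2).symm
end

section
/- Let A be a real symmetric positive semidefinite p×p matrix, q ≥ 1 an integer, and c > 0. Then the function l(Υ) = −(1/2)·tr(A·Υ + Υ^q) + c·log det Υ, defined on the set of real symmetric positive definite p×p matrices, attains a unique global maximum, and the maximizer is the unique symmetric positive definite solution of A·Υ + q·Υ^q = 2c·I. -/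
open Matrix

namespace Stmt15

variable {n : Type*} [Fintype n] [DecidableEq n]

lemma spectral_real {C : Matrix n n ℝ} (hC : C.IsHermitian) :
    C = (hC.eigenvectorUnitary : Matrix n n ℝ) * diagonal hC.eigenvalues
        * (hC.eigenvectorUnitary : Matrix n n ℝ)ᴴ := by
  have h := hC.spectral_theorem
  rw [RCLike.ofReal_real_eq_id, Function.id_comp] at h
  simpa [Matrix.star_eq_conjTranspose] using h

lemma unit_mul_star {C : Matrix n n ℝ} (hC : C.IsHermitian) :
    (hC.eigenvectorUnitary : Matrix n n ℝ) * (hC.eigenvectorUnitary : Matrix n n ℝ)ᴴ = 1 := by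
  have h := mem_unitaryGroup_iff.mp hC.eigenvectorUnitary.2
  rwa [Matrix.star_eq_conjTranspose] at h

lemma unit_star_mul {C : Matrix n n ℝ} (hC : C.IsHermitian) :
    (hC.eigenvectorUnitary : Matrix n n ℝ)ᴴ * (hC.eigenvectorUnitary : Matrix n n ℝ) = 1 := by
  have h := mem_unitaryGroup_iff'.mp hC.eigenvectorUnitary.2
  rwa [Matrix.star_eq_conjTranspose] at h

lemma trace_conj {U X : Matrix n n ℝ} (hU' : Uᴴ * U = 1) :
    (U * X * Uᴴ).trace = X.trace := by
  rw [Matrix.trace_mul_cycle, hU', Matrix.one_mul]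



lemma scalar_tangent {x y : ℝ} (hx : 0 ≤ x) (hy : 0 ≤ y) (k : ℕ) :
    x ^ (k + 1) + ((k : ℝ) + 1) * (x ^ k * y - x ^ (k + 1)) ≤ y ^ (k + 1) := by
  rcases eq_or_lt_of_le hx with h0 | hxpos
  · subst h0
    cases k with
    | zero => simp
    | succ m => simp [zero_pow, pow_succ]; positivity
  · have ha : (-2 : ℝ) ≤ y / x - 1 := by
      have : 0 ≤ y / x := div_nonneg hy hxpos.le
      linarith
    have h := one_add_mul_le_pow ha (k + 1)
    have h1 : (1 : ℝ) + (y / x - 1) = y / x := by ring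
    rw [h1] at h
    have key := mul_le_mul_of_nonneg_right h (le_of_lt (pow_pos hxpos (k + 1)))
    have e1 : (y / x) ^ (k + 1) * x ^ (k + 1) = y ^ (k + 1) := by
      rw [div_pow, div_mul_cancel₀ _ (pow_ne_zero _ hxpos.ne')]
    have e2 : (1 + (((k : ℕ) + 1 : ℕ) : ℝ) * (y / x - 1)) * x ^ (k + 1)
        = x ^ (k + 1) + ((k : ℝ) + 1) * (x ^ k * y - x ^ (k + 1)) := by
      field_simp
      push_cast
      ring
    push_cast at key
    push_cast at e2
    rw [e1] at key
    rw [e2] at key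
    exact key

lemma posDef_conj {n : Type*} [Fintype n] [DecidableEq n] {A N : Matrix n n ℝ}
    (hA : A.PosDef) (hN : IsUnit N) : (N * A * Nᴴ).PosDef := by
  refine PosDef.of_dotProduct_mulVec_pos (isHermitian_mul_mul_conjTranspose _ hA.1) fun x hx => ?_
  have hinj : Function.Injective (Nᴴ.mulVec) :=
    mulVec_injective_iff_isUnit.2 ((Matrix.isUnit_conjTranspose N).2 hN)
  have hx' : Nᴴ *ᵥ x ≠ 0 := by
    intro h
    exact hx (hinj (by simpa using h))
  have := hA.dotProduct_mulVec_pos hx'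
  have e : star x ⬝ᵥ ((N * A * Nᴴ) *ᵥ x) = star (Nᴴ *ᵥ x) ⬝ᵥ (A *ᵥ (Nᴴ *ᵥ x)) := by
    rw [star_mulVec, conjTranspose_conjTranspose, ← mulVec_mulVec, ← mulVec_mulVec,
      dotProduct_mulVec]
  rw [e]
  exact this

lemma conj_pow {n : Type*} [Fintype n] [DecidableEq n] {U D : Matrix n n ℝ}
    (hU : U * Uᴴ = 1) (hU' : Uᴴ * U = 1) (k : ℕ) :
    (U * D * Uᴴ) ^ k = U * D ^ k * Uᴴ := by
  induction k with
  | zero => rw [pow_zero, pow_zero, Matrix.mul_one, hU]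
  | succ m ih =>
      rw [pow_succ, ih, pow_succ]
      calc U * D ^ m * Uᴴ * (U * D * Uᴴ) = U * D ^ m * (Uᴴ * U) * D * Uᴴ := by
            simp only [Matrix.mul_assoc]
        _ = U * (D ^ m * D) * Uᴴ := by rw [hU']; simp only [Matrix.mul_one, Matrix.mul_assoc]

lemma trace_diag_conj {n : Type*} [Fintype n] [DecidableEq n]
    (a b : n → ℝ) (W : Matrix n n ℝ) :
    (diagonal a * W * diagonal b * Wᴴ).trace = ∑ i, ∑ j, a i * b j * (W i j) ^ 2 := by
  have e : ∀ i j, (diagonal a * W * diagonal b) i j = a i * W i j * b j := by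
    intro i j
    rw [Matrix.mul_diagonal, Matrix.diagonal_mul]
  simp only [Matrix.trace, Matrix.diag_apply, Matrix.mul_apply, e, Matrix.conjTranspose_apply,
    star_trivial]
  refine Finset.sum_congr rfl fun i _ => Finset.sum_congr rfl fun j _ => by ring



lemma klein_pow {B Y : Matrix n n ℝ} (hB : B.PosDef) (hY : Y.PosDef) (k : ℕ) :
    (Y ^ (k + 1)).trace + ((k : ℝ) + 1) * ((Y ^ k * B).trace - (Y ^ (k + 1)).trace)
      ≤ (B ^ (k + 1)).trace := by
  set U : Matrix n n ℝ := (hY.1.eigenvectorUnitary : Matrix n n ℝ) with hUdef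
  set V : Matrix n n ℝ := (hB.1.eigenvectorUnitary : Matrix n n ℝ) with hVdef
  set υ := hY.1.eigenvalues with hυdef
  set β := hB.1.eigenvalues with hβdef
  have hU1 : U * Uᴴ = 1 := unit_mul_star hY.1
  have hU2 : Uᴴ * U = 1 := unit_star_mul hY.1
  have hV1 : V * Vᴴ = 1 := unit_mul_star hB.1
  have hV2 : Vᴴ * V = 1 := unit_star_mul hB.1
  set W : Matrix n n ℝ := Uᴴ * V with hWdef
  have hWH : Wᴴ = Vᴴ * U := by rw [hWdef, conjTranspose_mul, conjTranspose_conjTranspose]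
  have hW1 : W * Wᴴ = 1 := by
    rw [hWdef, hWH, Matrix.mul_assoc, ← Matrix.mul_assoc V Vᴴ U, hV1, Matrix.one_mul, hU2]
  have hW2 : Wᴴ * W = 1 := by
    rw [hWdef, hWH, Matrix.mul_assoc, ← Matrix.mul_assoc U Uᴴ V, hU1, Matrix.one_mul, hV2]
  have row : ∀ i, ∑ j, (W i j) ^ 2 = 1 := by
    intro i
    have := congrFun (congrFun hW1 i) i
    simp only [Matrix.mul_apply, Matrix.conjTranspose_apply, star_trivial,
      Matrix.one_apply_eq] at this
    simpa [pow_two] using this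
  have col : ∀ j, ∑ i, (W i j) ^ 2 = 1 := by
    intro j
    have := congrFun (congrFun hW2 j) j
    simp only [Matrix.mul_apply, Matrix.conjTranspose_apply, star_trivial,
      Matrix.one_apply_eq] at this
    simpa [pow_two] using this
  have hYpow : ∀ m : ℕ, Y ^ m = U * diagonal (fun i => υ i ^ m) * Uᴴ := by
    intro m
    conv_lhs => rw [spectral_real hY.1]
    rw [conj_pow hU1 hU2, Matrix.diagonal_pow]
    rfl
  have hBpow : ∀ m : ℕ, B ^ m = V * diagonal (fun j => β j ^ m) * Vᴴ := by
    intro m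
    conv_lhs => rw [spectral_real hB.1]
    rw [conj_pow hV1 hV2, Matrix.diagonal_pow]
    rfl
  have htrY : (Y ^ (k + 1)).trace = ∑ i, υ i ^ (k + 1) := by
    rw [hYpow (k + 1), trace_conj hU2, trace_diagonal]
  have htrB : (B ^ (k + 1)).trace = ∑ j, β j ^ (k + 1) := by
    rw [hBpow (k + 1), trace_conj hV2, trace_diagonal]
  have hmix : (Y ^ k * B).trace = ∑ i, ∑ j, υ i ^ k * β j * (W i j) ^ 2 := by
    have hid : Y ^ k * B
        = U * (diagonal (fun i => υ i ^ k) * W * diagonal β * Wᴴ) * Uᴴ := by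
      rw [hYpow k]
      conv_lhs => rw [spectral_real hB.1]
      rw [hWdef, hWH]
      simp only [Matrix.mul_assoc]
      rw [← hVdef, ← hβdef, hU1, Matrix.mul_one]
    rw [hid, trace_conj hU2, trace_diag_conj]
  have hrow : ∑ i, υ i ^ (k + 1) = ∑ i, ∑ j, (W i j) ^ 2 * υ i ^ (k + 1) := by
    refine Finset.sum_congr rfl fun i _ => ?_
    rw [← Finset.sum_mul, row i, one_mul]
  have hcol : ∑ j, β j ^ (k + 1) = ∑ i, ∑ j, (W i j) ^ 2 * β j ^ (k + 1) := by
    rw [Finset.sum_comm]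
    refine Finset.sum_congr rfl fun j _ => ?_
    rw [← Finset.sum_mul, col j, one_mul]
  have key : ∑ i, ∑ j, ((W i j) ^ 2 * υ i ^ (k + 1)
        + ((k : ℝ) + 1) * (υ i ^ k * β j * (W i j) ^ 2 - (W i j) ^ 2 * υ i ^ (k + 1)))
      ≤ ∑ i, ∑ j, (W i j) ^ 2 * β j ^ (k + 1) := by
    refine Finset.sum_le_sum fun i _ => Finset.sum_le_sum fun j _ => ?_
    have h := mul_le_mul_of_nonneg_left
      (scalar_tangent (hY.eigenvalues_pos i).le (hB.eigenvalues_pos j).le k) (sq_nonneg (W i j))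
    nlinarith [h]
  rw [htrY, htrB, hmix, hrow, hcol]
  have e : (∑ i, ∑ j, (W i j) ^ 2 * υ i ^ (k + 1))
      + ((k : ℝ) + 1) * ((∑ i, ∑ j, υ i ^ k * β j * (W i j) ^ 2)
          - ∑ i, ∑ j, (W i j) ^ 2 * υ i ^ (k + 1))
      = ∑ i, ∑ j, ((W i j) ^ 2 * υ i ^ (k + 1)
        + ((k : ℝ) + 1) * (υ i ^ k * β j * (W i j) ^ 2 - (W i j) ^ 2 * υ i ^ (k + 1))) := by
    simp only [mul_sub, Finset.mul_sum, Finset.sum_add_distrib, Finset.sum_sub_distrib]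
  rw [e]
  exact key


lemma log_det_lt {C : Matrix n n ℝ} (hC : C.PosDef) (hne : C ≠ 1) :
    Real.log C.det < C.trace - (Fintype.card n : ℝ) := by
  set γ := hC.1.eigenvalues with hγdef
  have hγpos : ∀ i, 0 < γ i := fun i => hC.eigenvalues_pos i
  have hdet : C.det = ∏ i, γ i := hC.1.det_eq_prod_eigenvalues
  have htr : C.trace = ∑ i, γ i := by
    conv_lhs => rw [spectral_real hC.1]
    rw [trace_conj (unit_star_mul hC.1), trace_diagonal]
  have hex : ∃ i, γ i ≠ 1 := by
    by_contra h
    push_neg at h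
    apply hne
    conv_lhs => rw [spectral_real hC.1]
    have : diagonal γ = 1 := by
      rw [show γ = fun _ => (1 : ℝ) from funext h]
      simp [diagonal_one]
    rw [this, Matrix.mul_one, unit_mul_star hC.1]
  obtain ⟨i0, hi0⟩ := hex
  have hlog : Real.log C.det = ∑ i, Real.log (γ i) := by
    rw [hdet, Real.log_prod fun i _ => (hγpos i).ne']
  rw [hlog, htr]
  have hsum : ∑ i, Real.log (γ i) < ∑ i, (γ i - 1) := by
    refine Finset.sum_lt_sum (fun i _ => Real.log_le_sub_one_of_pos (hγpos i))
      ⟨i0, Finset.mem_univ i0, Real.log_lt_sub_one_of_pos (hγpos i0) hi0⟩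
  have : ∑ i, (γ i - 1) = (∑ i, γ i) - (Fintype.card n : ℝ) := by
    rw [Finset.sum_sub_distrib]
    simp
  linarith [hsum, this.le, this.ge]

lemma klein_log {B Y : Matrix n n ℝ} (hB : B.PosDef) (hY : Y.PosDef) (hne : B ≠ Y) :
    Real.log B.det < Real.log Y.det + ((Y⁻¹ * B).trace - (Fintype.card n : ℝ)) := by
  set R := (by open scoped MatrixOrder in exact CFC.sqrt Y : Matrix n n ℝ) with hRdef
  have hRher : R.IsHermitian := by open scoped MatrixOrder in exact (CFC.sqrt_nonneg Y).posSemidef.1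
  have hRR : R * R = Y := by open scoped MatrixOrder in exact CFC.sqrt_mul_sqrt_self Y hY.posSemidef.nonneg
  have hdetR : R.det * R.det = Y.det := by rw [← det_mul, hRR]
  have hdetRne : R.det ≠ 0 := by
    intro h
    have := hY.det_pos
    rw [← hdetR, h, mul_zero] at this
    exact lt_irrefl _ this
  have hRunit : IsUnit R := (isUnit_iff_isUnit_det R).2 hdetRne.isUnit
  have hRinv : IsUnit R⁻¹ := isUnit_nonsing_inv_iff.2 hRunit
  have hRinvH : R⁻¹.IsHermitian := hRher.inv
  set C := R⁻¹ * B * R⁻¹ with hCdef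
  have hCpd : C.PosDef := by
    have h := posDef_conj hB hRinv
    rwa [hRinvH.eq] at h
  have hCrec : R * C * R = B := by
    rw [hCdef]
    have h1 : R * R⁻¹ = 1 := mul_nonsing_inv R hdetRne.isUnit
    have h2 : R⁻¹ * R = 1 := nonsing_inv_mul R hdetRne.isUnit
    calc R * (R⁻¹ * B * R⁻¹) * R = (R * R⁻¹) * B * (R⁻¹ * R) := by
          simp only [Matrix.mul_assoc]
      _ = B := by rw [h1, h2, Matrix.one_mul, Matrix.mul_one]
  have hCne1 : C ≠ 1 := by
    intro h
    apply hne
    rw [← hCrec, h, Matrix.mul_one, hRR]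
  have htrC : (Y⁻¹ * B).trace = C.trace := by
    rw [← hRR, Matrix.mul_inv_rev, Matrix.mul_assoc, Matrix.trace_mul_comm, hCdef, Matrix.mul_assoc]
  have hdetC : C.det = B.det / Y.det := by
    rw [hCdef, det_mul, det_mul, det_nonsing_inv, Ring.inverse_eq_inv']
    rw [← hdetR]
    field_simp
  have hkey := log_det_lt hCpd hCne1
  rw [hdetC, Real.log_div hB.det_pos.ne' hY.det_pos.ne'] at hkey
  rw [htrC]
  linarith [hkey]


lemma conj_mul {U X Z : Matrix n n ℝ} (hU2 : Uᴴ * U = 1) :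
    (U * X * Uᴴ) * (U * Z * Uᴴ) = U * (X * Z) * Uᴴ := by
  calc (U * X * Uᴴ) * (U * Z * Uᴴ) = U * X * (Uᴴ * U) * Z * Uᴴ := by
        simp only [Matrix.mul_assoc]
    _ = U * (X * Z) * Uᴴ := by
        rw [hU2, Matrix.mul_one]
        simp only [Matrix.mul_assoc]

lemma exist_root (k : ℕ) {c : ℝ} (hc : 0 < c) {d : ℝ} (hd : 0 ≤ d) :
    ∃ x : ℝ, 0 < x ∧ d * x + ((k : ℝ) + 1) * x ^ (k + 1) = 2 * c := by
  set f : ℝ → ℝ := fun x => d * x + ((k : ℝ) + 1) * x ^ (k + 1) with hf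
  set M : ℝ := max 1 (2 * c) with hM
  have hM1 : (1 : ℝ) ≤ M := le_max_left _ _
  have hM2 : 2 * c ≤ M := le_max_right _ _
  have hM0 : (0 : ℝ) ≤ M := zero_le_one.trans hM1
  have hfM : 2 * c ≤ f M := by
    have h1 : M ≤ M ^ (k + 1) := le_self_pow₀ hM1 (Nat.succ_ne_zero k)
    have h2 : (1 : ℝ) ≤ (k : ℝ) + 1 := by
      have := Nat.cast_nonneg (α := ℝ) k
      linarith
    have h3 : (0 : ℝ) ≤ d * M := mul_nonneg hd hM0
    have h4 : (0 : ℝ) ≤ M ^ (k + 1) := pow_nonneg hM0 _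
    show 2 * c ≤ d * M + ((k : ℝ) + 1) * M ^ (k + 1)
    nlinarith
  have hf0 : f 0 = 0 := by simp [hf]
  have hcont : ContinuousOn f (Set.Icc 0 M) := by fun_prop
  have hIVT := intermediate_value_Icc hM0 hcont
  have hmem : (2 * c) ∈ Set.Icc (f 0) (f M) := by
    rw [hf0]
    exact ⟨by linarith, hfM⟩
  obtain ⟨x, hx, hfx⟩ := hIVT hmem
  refine ⟨x, ?_, hfx⟩
  rcases lt_or_eq_of_le hx.1 with h | h
  · exact h
  · exfalso
    rw [← h] at hfx
    rw [hf0] at hfx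
    linarith

end Stmt15

open Stmt15 in

/-- Let `A` be symmetric positive semidefinite, `q ≥ 1`, `c > 0`.  Then
`l(Υ) = −(1/2)·tr(A·Υ + Υ^q) + c·log det Υ` on positive definite matrices attains a unique
global maximum, and the maximizer is the unique symmetric positive definite solution of
`A·Υ + q·Υ^q = 2c·I`. -/
theorem stmt_15 (p q : ℕ) (hq : 1 ≤ q) (c : ℝ) (hc : 0 < c)
    (A : Matrix (Fin p) (Fin p) ℝ) (hA : A.PosSemidef) :
    ∃ Υ : Matrix (Fin p) (Fin p) ℝ, Υ.PosDef ∧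
      (∀ B : Matrix (Fin p) (Fin p) ℝ, B.PosDef → B ≠ Υ →
        -(1 / 2) * (A * B + B ^ q).trace + c * Real.log B.det <
          -(1 / 2) * (A * Υ + Υ ^ q).trace + c * Real.log Υ.det) ∧
      A * Υ + (q : ℝ) • Υ ^ q = (2 * c) • (1 : Matrix (Fin p) (Fin p) ℝ) ∧
      ∀ B : Matrix (Fin p) (Fin p) ℝ, B.PosDef →
        A * B + (q : ℝ) • B ^ q = (2 * c) • (1 : Matrix (Fin p) (Fin p) ℝ) → B = Υ := by
  obtain ⟨k, rfl⟩ : ∃ k, q = k + 1 := ⟨q - 1, (Nat.succ_pred_eq_of_pos hq).symm⟩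
  -- the maximality engine: any positive definite solution of the equation is a strict
  -- global maximizer
  have main : ∀ Y : Matrix (Fin p) (Fin p) ℝ, Y.PosDef →
      A * Y + ((k + 1 : ℕ) : ℝ) • Y ^ (k + 1) = (2 * c) • 1 →
      ∀ B : Matrix (Fin p) (Fin p) ℝ, B.PosDef → B ≠ Y →
      -(1 / 2) * (A * B + B ^ (k + 1)).trace + c * Real.log B.det <
        -(1 / 2) * (A * Y + Y ^ (k + 1)).trace + c * Real.log Y.det := by
    intro Y hY heq B hB hne
    have hYdu : IsUnit Y.det := hY.det_pos.ne'.isUnit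
    have hAY : A * Y = (2 * c) • 1 - ((k + 1 : ℕ) : ℝ) • Y ^ (k + 1) :=
      eq_sub_of_add_eq heq
    have hAexp : A = (2 * c) • Y⁻¹ - ((k + 1 : ℕ) : ℝ) • Y ^ k := by
      have h1 : A * Y * Y⁻¹ = A := by
        rw [Matrix.mul_assoc, Matrix.mul_nonsing_inv _ hYdu, Matrix.mul_one]
      rw [← h1, hAY, Matrix.sub_mul, smul_mul_assoc, smul_mul_assoc, Matrix.one_mul,
        pow_succ, Matrix.mul_assoc, Matrix.mul_nonsing_inv _ hYdu, Matrix.mul_one]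
    have htAB : (A * B).trace
        = 2 * c * (Y⁻¹ * B).trace - ((k : ℝ) + 1) * (Y ^ k * B).trace := by
      rw [hAexp, Matrix.sub_mul, smul_mul_assoc, smul_mul_assoc, Matrix.trace_sub,
        Matrix.trace_smul, Matrix.trace_smul, smul_eq_mul, smul_eq_mul]
      push_cast
      ring
    have htAY2 : (A * Y).trace
        = 2 * c * (Fintype.card (Fin p) : ℝ) - ((k : ℝ) + 1) * (Y ^ (k + 1)).trace := by
      rw [hAexp, Matrix.sub_mul, smul_mul_assoc, smul_mul_assoc,
        Matrix.nonsing_inv_mul _ hYdu, ← pow_succ, Matrix.trace_sub, Matrix.trace_smul,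
        Matrix.trace_smul, Matrix.trace_one, smul_eq_mul, smul_eq_mul]
      push_cast
      ring
    rw [Matrix.trace_add, Matrix.trace_add, htAB, htAY2]
    have kp := klein_pow hB hY k
    have kl := mul_lt_mul_of_pos_left (klein_log hB hY hne) hc
    nlinarith [kp, kl]
  -- existence of a positive definite solution
  choose g hgpos hgeq using fun i => exist_root k hc (hA.eigenvalues_nonneg i)
  set U : Matrix (Fin p) (Fin p) ℝ := (hA.1.eigenvectorUnitary : Matrix (Fin p) (Fin p) ℝ)
    with hUdef
  have hU1 : U * Uᴴ = 1 := unit_mul_star hA.1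
  have hU2 : Uᴴ * U = 1 := unit_star_mul hA.1
  set Y : Matrix (Fin p) (Fin p) ℝ := U * Matrix.diagonal g * Uᴴ with hYdef
  have hYpd : Y.PosDef := posDef_conj (Matrix.PosDef.diagonal hgpos)
    ⟨⟨U, Uᴴ, hU1, hU2⟩, rfl⟩
  have hYq : Y ^ (k + 1) = U * Matrix.diagonal (fun i => g i ^ (k + 1)) * Uᴴ := by
    rw [hYdef, conj_pow hU1 hU2, Matrix.diagonal_pow]
    rfl
  have hAmul : A * Y
      = U * Matrix.diagonal (fun i => hA.1.eigenvalues i * g i) * Uᴴ := by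
    conv_lhs => rw [spectral_real hA.1, hYdef]
    rw [conj_mul hU2, Matrix.diagonal_mul_diagonal]
  have heq : A * Y + ((k + 1 : ℕ) : ℝ) • Y ^ (k + 1) = (2 * c) • 1 := by
    rw [hAmul, hYq]
    have hfun : (fun i => ((k : ℝ) + 1) * g i ^ (k + 1))
        = ((k + 1 : ℕ) : ℝ) • fun i => g i ^ (k + 1) := by
      funext i
      push_cast
      simp [smul_eq_mul]
    have hsmul : ((k + 1 : ℕ) : ℝ) • (U * Matrix.diagonal (fun i => g i ^ (k + 1)) * Uᴴ)
        = U * Matrix.diagonal (fun i => ((k : ℝ) + 1) * g i ^ (k + 1)) * Uᴴ := by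
      rw [hfun, Matrix.diagonal_smul, mul_smul_comm, smul_mul_assoc]
    rw [hsmul]
    have hdiag : (Matrix.diagonal (fun _ => 2 * c) : Matrix (Fin p) (Fin p) ℝ)
        = (2 * c) • 1 := by
      ext i j
      by_cases h : i = j <;> simp [Matrix.diagonal_apply, Matrix.one_apply, h]
    calc (U * Matrix.diagonal (fun i => hA.1.eigenvalues i * g i) * Uᴴ)
          + (U * Matrix.diagonal (fun i => ((k : ℝ) + 1) * g i ^ (k + 1)) * Uᴴ)
        = U * (Matrix.diagonal (fun i => hA.1.eigenvalues i * g i)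
            + Matrix.diagonal (fun i => ((k : ℝ) + 1) * g i ^ (k + 1))) * Uᴴ := by
          rw [Matrix.mul_add, Matrix.add_mul]
      _ = U * Matrix.diagonal
            (fun i => hA.1.eigenvalues i * g i + ((k : ℝ) + 1) * g i ^ (k + 1)) * Uᴴ := by
          rw [Matrix.diagonal_add]
      _ = U * Matrix.diagonal (fun _ => 2 * c) * Uᴴ := by
          rw [show (fun i => hA.1.eigenvalues i * g i + ((k : ℝ) + 1) * g i ^ (k + 1))
            = (fun _ : Fin p => 2 * c) from funext fun i => hgeq i]
      _ = (2 * c) • 1 := by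
          rw [hdiag, mul_smul_comm, smul_mul_assoc, Matrix.mul_one, hU1]
  refine ⟨Y, hYpd, ?_, heq, ?_⟩
  · intro B hB hne
    exact main Y hYpd heq B hB hne
  · intro B hB hBeq
    by_contra hne
    have h1 := main Y hYpd heq B hB hne
    have h2 := main B hB hBeq Y hYpd (Ne.symm hne)
    linarith
end

section
/- Let S be a real symmetric positive semidefinite p×p matrix, n a positive integer, c > 0 and α > 0 real numbers. Define M = (n/(2c))·(S + R), where R is the unique symmetric positive semidefinite square root of S² + (8α²c/n²)·I. Then M is symmetric positive definite, M commutes with S, and c·M² − n·S·M = 2α²·I. -/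
open Matrix

/-- If `S` commutes with `R²` and `R` is positive semidefinite, then `S` commutes with `R`. -/
lemma commute_of_commute_sq {p : ℕ} {S R : Matrix (Fin p) (Fin p) ℝ} (hR : R.PosSemidef)
    (h : S * R ^ 2 = R ^ 2 * S) : S * R = R * S := by
  set V : Matrix (Fin p) (Fin p) ℝ := (hR.1.eigenvectorUnitary : Matrix (Fin p) (Fin p) ℝ) with hV
  have hVsV : star V * V = 1 := by
    rw [hV]; exact Matrix.mem_unitaryGroup_iff'.mp hR.1.eigenvectorUnitary.2
  have hVVs : V * star V = 1 := by
    rw [hV]; exact Matrix.mem_unitaryGroup_iff.mp hR.1.eigenvectorUnitary.2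
  set ev : Fin p → ℝ := hR.1.eigenvalues with hev
  set D : Matrix (Fin p) (Fin p) ℝ := Matrix.diagonal ev with hD
  have hspec : R = V * D * star V := by
    have := hR.1.spectral_theorem
    simpa [hD, hV, hev] using this
  set T : Matrix (Fin p) (Fin p) ℝ := star V * S * V with hT
  have hS' : S = V * T * star V := by
    rw [hT]
    rw [show V * (star V * S * V) * star V = (V * star V) * S * (V * star V) by
      noncomm_ring]
    rw [hVVs]; simp
  have hR2' : R ^ 2 = V * (D * D) * star V := by
    rw [hspec, pow_two]
    rw [show V * D * star V * (V * D * star V) = V * (D * (star V * V) * D) * star V by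
      noncomm_ring]
    rw [hVsV]; simp [mul_assoc]
  have hTD2 : T * (D * D) = (D * D) * T := by
    have := h
    rw [hS', hR2'] at this
    have h2 : (star V * (V * T * star V * (V * (D * D) * star V))) * V =
        (star V * (V * (D * D) * star V * (V * T * star V))) * V := by rw [this]
    rw [show (star V * (V * T * star V * (V * (D * D) * star V))) * V =
        (star V * V) * T * (star V * V) * (D * D) * (star V * V) by noncomm_ring,
      show (star V * (V * (D * D) * star V * (V * T * star V))) * V =
        (star V * V) * (D * D) * (star V * V) * T * (star V * V) by noncomm_ring,
      hVsV] at h2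
    simpa using h2
  have hnonneg : ∀ i, 0 ≤ ev i := fun i => hR.eigenvalues_nonneg i
  have hTD : T * D = D * T := by
    ext i j
    have h1 : T i j * (ev j * ev j) = (ev i * ev i) * T i j := by
      have := congrFun (congrFun hTD2 i) j
      simpa [hD, Matrix.diagonal_mul_diagonal, Matrix.mul_diagonal,
        Matrix.diagonal_mul] using this
    have h2 : T i j * ev j = ev i * T i j := by
      rcases eq_or_ne (T i j) 0 with h0 | h0
      · simp [h0]
      · have hfac : T i j * (ev j * ev j - ev i * ev i) = 0 := by linear_combination h1
        rcases mul_eq_zero.mp hfac with h' | h'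
        · exact absurd h' h0
        · have hev2 : ev j * ev j = ev i * ev i := by linarith
          have : ev i = ev j := by nlinarith [hnonneg i, hnonneg j]
          rw [this]; ring
    simpa [hD, Matrix.mul_diagonal, Matrix.diagonal_mul] using h2
  calc S * R = (V * T * star V) * (V * D * star V) := by rw [← hS', ← hspec]
    _ = V * (T * (star V * V) * D) * star V := by noncomm_ring
    _ = V * (T * D) * star V := by rw [hVsV]; simp [mul_assoc]
    _ = V * (D * T) * star V := by rw [hTD]
    _ = (V * D * star V) * (V * T * star V) := by
        rw [show (V * D * star V) * (V * T * star V) = V * (D * (star V * V) * T) * star V by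
          noncomm_ring, hVsV]; simp [mul_assoc]
    _ = R * S := by rw [← hS', ← hspec]

/-- Let `S` be symmetric positive semidefinite, `n` a positive integer, `c > 0`, `α > 0`,
and `M = (n/(2c))·(S + R)` where `R` is the positive semidefinite square root of
`S² + (8α²c/n²)·I`.  Then `M` is positive definite, commutes with `S`, and
`c·M² − n·S·M = 2α²·I`. -/
theorem stmt_16 (p n : ℕ) (hn : 0 < n) (c α : ℝ) (hc : 0 < c) (hα : 0 < α)
    (S R : Matrix (Fin p) (Fin p) ℝ) (hS : S.PosSemidef) (hR : R.PosSemidef)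
    (hR2 : R ^ 2 = S ^ 2 + (8 * α ^ 2 * c / (n : ℝ) ^ 2) • (1 : Matrix (Fin p) (Fin p) ℝ)) :
    (((n : ℝ) / (2 * c)) • (S + R)).PosDef ∧
      ((n : ℝ) / (2 * c)) • (S + R) * S = S * (((n : ℝ) / (2 * c)) • (S + R)) ∧
      c • (((n : ℝ) / (2 * c)) • (S + R)) ^ 2 -
          (n : ℝ) • (S * (((n : ℝ) / (2 * c)) • (S + R))) =
        (2 * α ^ 2) • (1 : Matrix (Fin p) (Fin p) ℝ) := by
  have hn' : (0 : ℝ) < n := by exact_mod_cast hn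
  set t : ℝ := 8 * α ^ 2 * c / (n : ℝ) ^ 2 with ht
  have ht0 : 0 < t := by positivity
  -- S commutes with R²
  have hcomm2 : S * R ^ 2 = R ^ 2 * S := by
    rw [hR2, mul_add, add_mul, mul_smul_comm, smul_mul_assoc, mul_one, one_mul,
      ← pow_succ, ← pow_succ']
  have hcomm : S * R = R * S := commute_of_commute_sq hR hcomm2
  -- R² is positive definite
  have hR2pd : (R ^ 2).PosDef := by
    rw [hR2]
    refine Matrix.PosDef.posSemidef_add (hS.pow 2) ?_
    have : t • (1 : Matrix (Fin p) (Fin p) ℝ) = Matrix.diagonal (fun _ => t) := by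
      rw [smul_eq_diagonal_mul]; simp
    rw [this]
    exact Matrix.PosDef.diagonal (fun _ => ht0)
  -- R is positive definite
  have hRpd : R.PosDef := by
    refine Matrix.PosDef.of_dotProduct_mulVec_pos hR.1 (fun x hx => ?_)
    rcases lt_or_eq_of_le ((Matrix.posSemidef_iff_dotProduct_mulVec.mp hR).2 x) with h | h
    · exact h
    · exfalso
      have hRx : R *ᵥ x = 0 := (hR.dotProduct_mulVec_zero_iff x).mp h.symm
      have := hR2pd.dotProduct_mulVec_pos hx
      rw [pow_two, ← Matrix.mulVec_mulVec, hRx, Matrix.mulVec_zero, dotProduct_zero] at this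
      exact lt_irrefl 0 this
  have hk : 0 < (n : ℝ) / (2 * c) := by positivity
  refine ⟨?_, ?_, ?_⟩
  · -- positive definiteness
    have hSR : (S + R).PosDef := Matrix.PosDef.posSemidef_add hS hRpd
    have hherm : (((n : ℝ) / (2 * c)) • (S + R)).IsHermitian := by
      show _ᴴ = _
      rw [Matrix.conjTranspose_smul, star_trivial, hSR.1.eq]
    refine Matrix.PosDef.of_dotProduct_mulVec_pos hherm (fun x hx => ?_)
    rw [Matrix.smul_mulVec, dotProduct_smul, smul_eq_mul]
    exact mul_pos hk (hSR.dotProduct_mulVec_pos hx)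
  · -- commutation
    rw [Matrix.smul_mul, Matrix.mul_smul]
    congr 1
    rw [add_mul, mul_add, hcomm]
  · -- the quadratic equation
    have hexp : (S + R) ^ 2 = S ^ 2 + S * R + (S * R + R ^ 2) := by
      rw [pow_two, add_mul, mul_add, mul_add, hcomm, ← pow_two]
      noncomm_ring
    have hSSR : S * (S + R) = S ^ 2 + S * R := by rw [mul_add, ← pow_two]
    rw [smul_pow, hexp, hR2, Matrix.mul_smul, hSSR]
    have hne : (n:ℝ) ≠ 0 := hn'.ne'
    have hcne : c ≠ 0 := hc.ne'
    clear_value t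
    subst ht
    match_scalars <;> (field_simp; try ring)
end

section
/- Let S be a real symmetric positive semidefinite p×p matrix, n a positive integer, c > 0 and α > 0 real numbers, and define M = (n/(2c))·(S + R), where R is the unique symmetric positive semidefinite square root of S² + (8α²c/n²)·I. Set β = √2·α/√c. Then M − β·I is positive semidefinite and β·I + (n/c)·S − M is positive semidefinite; that is, β·I ≤ M ≤ β·I + (n/c)·S in the Loewner order. -/
lemma conj_diag_psd {p : ℕ} (U : Matrix (Fin p) (Fin p) ℝ)
    (f : Fin p → ℝ) (hf : ∀ i, 0 ≤ f i) :
    (U * Matrix.diagonal f * star U).PosSemidef := by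
  rw [Matrix.star_eq_conjTranspose]
  exact (Matrix.posSemidef_diagonal_iff.mpr hf).mul_mul_conjTranspose_same U

/-- Let `S` be symmetric positive semidefinite, `n` a positive integer, `c > 0`, `α > 0`,
`M = (n/(2c))·(S + R)` with `R` the positive semidefinite square root of
`S² + (8α²c/n²)·I`, and `β = √2·α/√c`.  Then `β·I ≤ M ≤ β·I + (n/c)·S` in the Loewner
order. -/
theorem stmt_17 (p n : ℕ) (hn : 0 < n) (c α : ℝ) (hc : 0 < c) (hα : 0 < α)
    (S R : Matrix (Fin p) (Fin p) ℝ) (hS : S.PosSemidef) (hR : R.PosSemidef)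
    (hR2 : R ^ 2 = S ^ 2 + (8 * α ^ 2 * c / (n : ℝ) ^ 2) • (1 : Matrix (Fin p) (Fin p) ℝ)) :
    (((n : ℝ) / (2 * c)) • (S + R) -
        (Real.sqrt 2 * α / Real.sqrt c) • (1 : Matrix (Fin p) (Fin p) ℝ)).PosSemidef ∧
      ((Real.sqrt 2 * α / Real.sqrt c) • (1 : Matrix (Fin p) (Fin p) ℝ) +
          ((n : ℝ) / c) • S - ((n : ℝ) / (2 * c)) • (S + R)).PosSemidef := by
  have hn' : (0:ℝ) < n := by exact_mod_cast hn
  set a : ℝ := (n : ℝ) / (2 * c) with ha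
  set β : ℝ := Real.sqrt 2 * α / Real.sqrt c with hβ
  set b : ℝ := 2 * Real.sqrt 2 * α * Real.sqrt c / n with hb
  have hsc : Real.sqrt c * Real.sqrt c = c := Real.mul_self_sqrt hc.le
  have hscpos : 0 < Real.sqrt c := Real.sqrt_pos.mpr hc
  have hbpos : 0 < b := by rw [hb]; positivity
  have hb2 : b ^ 2 = 8 * α ^ 2 * c / (n : ℝ) ^ 2 := by
    rw [hb, div_pow]
    congr 1
    rw [mul_pow, mul_pow, mul_pow, Real.sq_sqrt (by norm_num : (0:ℝ) ≤ 2), Real.sq_sqrt hc.le]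
    ring
  have hapos : 0 < a := div_pos hn' (by linarith)
  have hab : a * b = β := by
    rw [ha, hb, hβ, div_mul_div_comm, div_eq_div_iff (by positivity) hscpos.ne']
    linear_combination (2 * Real.sqrt 2 * α * (n:ℝ)) * hsc
  have h2a : (n : ℝ) / c = 2 * a := by rw [ha]; field_simp
  -- spectral decomposition of S
  have hH := hS.1
  set U : Matrix (Fin p) (Fin p) ℝ := (hH.eigenvectorUnitary : Matrix (Fin p) (Fin p) ℝ)
    with hUdef
  set ev : Fin p → ℝ := hH.eigenvalues with hev
  have hevnn : ∀ i, 0 ≤ ev i := fun i => hS.eigenvalues_nonneg i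
  set C : (Fin p → ℝ) → Matrix (Fin p) (Fin p) ℝ :=
    fun f => U * Matrix.diagonal f * star U with hC
  have hUU : star U * U = 1 := by simp [hUdef]
  have hUU' : U * star U = 1 := by simp [hUdef]
  have hSrep : S = C ev := by
    have := hH.spectral_theorem
    simpa using this
  have hOnerep : (1 : Matrix (Fin p) (Fin p) ℝ) = C (fun _ => (1:ℝ)) := by
    rw [hC]; simp only [Matrix.diagonal_one, mul_one, hUU']
  have Cmul : ∀ f g, C f * C g = C (fun i => f i * g i) := by
    intro f g
    show (U * Matrix.diagonal f * star U) * (U * Matrix.diagonal g * star U)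
      = U * Matrix.diagonal (fun i => f i * g i) * star U
    simp only [Matrix.mul_assoc]
    rw [← Matrix.mul_assoc (star U) U, hUU, Matrix.one_mul,
      ← Matrix.mul_assoc (Matrix.diagonal f), Matrix.diagonal_mul_diagonal]
  have Cadd : ∀ f g, C f + C g = C (fun i => f i + g i) := by
    intro f g
    simp only [hC, ← Matrix.add_mul, ← Matrix.mul_add, Matrix.diagonal_add]
  have Csmul : ∀ (r : ℝ) f, r • C f = C (fun i => r * f i) := by
    intro r f
    show r • (U * Matrix.diagonal f * star U) = U * Matrix.diagonal (r • f) * star U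
    rw [Matrix.diagonal_smul, Matrix.mul_smul, Matrix.smul_mul]
  have Csub : ∀ f g, C f - C g = C (fun i => f i - g i) := by
    intro f g
    rw [sub_eq_add_neg, ← neg_one_smul ℝ (C g), Csmul, Cadd]
    congr 1; funext i; ring
  set d' : Fin p → ℝ := fun i => Real.sqrt (ev i ^ 2 + b ^ 2) with hd'
  have hd'nn : ∀ i, 0 ≤ d' i := fun i => Real.sqrt_nonneg _
  have hd'lb : ∀ i, b ≤ d' i := by
    intro i
    rw [hd']
    calc b = Real.sqrt (b ^ 2) := (Real.sqrt_sq hbpos.le).symm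
    _ ≤ _ := Real.sqrt_le_sqrt (by nlinarith [sq_nonneg (ev i)])
  have hd'ub : ∀ i, d' i ≤ ev i + b := by
    intro i
    rw [hd']
    calc Real.sqrt (ev i ^ 2 + b ^ 2) ≤ Real.sqrt ((ev i + b) ^ 2) :=
      Real.sqrt_le_sqrt (by nlinarith [hevnn i, hbpos.le])
    _ = ev i + b := Real.sqrt_sq (by nlinarith [hevnn i, hbpos])
  have hR'psd : (C d').PosSemidef := conj_diag_psd U d' hd'nn
  have hR'2 : C d' ^ 2 = S ^ 2 + (8 * α ^ 2 * c / (n : ℝ) ^ 2) • (1 : Matrix (Fin p) (Fin p) ℝ) := by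
    rw [sq, Cmul, hSrep, sq, Cmul, hOnerep, Csmul, Cadd, ← hb2]
    apply congrArg C
    funext i
    rw [Real.mul_self_sqrt (by positivity : (0:ℝ) ≤ ev i ^ 2 + b ^ 2)]
    ring
  have hRR' : R = C d' := by
    open scoped MatrixOrder in
    exact (CFC.sq_eq_sq_iff R (C d') hR.nonneg hR'psd.nonneg).mp (hR2.trans hR'2.symm)
  constructor
  · have : a • (S + R) - β • (1 : Matrix (Fin p) (Fin p) ℝ)
        = C (fun i => a * (ev i + d' i) - β * 1) := by
      rw [hSrep, hRR', hOnerep, Cadd, Csmul, Csmul, Csub]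
    rw [this]
    apply conj_diag_psd
    intro i
    have := hd'lb i
    have := hevnn i
    nlinarith [hapos, hab]
  · have : β • (1 : Matrix (Fin p) (Fin p) ℝ) + ((n : ℝ) / c) • S - a • (S + R)
        = C (fun i => β * 1 + ((n : ℝ) / c) * ev i - a * (ev i + d' i)) := by
      rw [hSrep, hRR', hOnerep, Csmul, Csmul, Cadd, Cadd, Csmul, Csub]
    rw [this]
    apply conj_diag_psd
    intro i
    have := hd'ub i
    have := hevnn i
    rw [h2a]
    nlinarith [hapos, hab]
end
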